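/- Lemma (pyramid with apex on a coordinate ray): if a B-facet \tau \subset Z^4_{\ge 0} is a pyramid whose apex lies on a coordinate ray (point of the form (0,0,0,c) up to permutation of coordinates, c \ge 2) with a 2-dimensional base, then \tau is a B_1-facet, a B_2-facet, or a flat B-border pyramid, i.e., up to permutation of coordinates a set of 5 points {(0,0,0,*), (0,0,a,*), (a,0,0,*), (0,1,1,*), (1,1,0,*)} whose last four points lie in a common affine 2-plane. -/

import Mathlib

/-- Cast an integer lattice point to a rational point. -/
def toQ {n : ℕ} (v : Fin n → ℤ) : Fin n → ℚ := fun i => (v i : ℚ)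

/-- A (3-dimensional) B-simplex in `ℤ⁴_{≥0}`: a tetrahedron which is a pyramid of lattice
height 1 whose base triangle lies in a coordinate hyperplane `{x_i = 0}`:
some coordinate `i` equals `1` at one vertex (the apex) and `0` at the other three. -/
def IsBSimplex4 (v : Fin 4 → (Fin 4 → ℤ)) : Prop :=
  ∃ i : Fin 4, ∃ a : Fin 4, v a i = 1 ∧ ∀ b : Fin 4, b ≠ a → v b i = 0

/-- A B-facet in `ℤ⁴_{≥0}`: a finite 3-dimensional set of lattice points with nonnegative
coordinates, lying on an affine hyperplane `∑ aᵢxᵢ = b` with all `aᵢ > 0` (positive normal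
covector), such that every 3-dimensional simplex (affinely independent quadruple) with
vertices in it is a B-simplex. -/
def IsBFacet (S : Finset (Fin 4 → ℤ)) : Prop :=
  (∀ p ∈ S, ∀ i, 0 ≤ p i) ∧
  (∃ a : Fin 4 → ℤ, (∀ i, 0 < a i) ∧ ∃ b : ℤ, ∀ p ∈ S, (∑ i, a i * p i) = b) ∧
  (∃ v : Fin 4 → (Fin 4 → ℤ), (∀ j, v j ∈ S) ∧ AffineIndependent ℚ (fun j => toQ (v j))) ∧
  (∀ v : Fin 4 → (Fin 4 → ℤ), (∀ j, v j ∈ S) →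
    AffineIndependent ℚ (fun j => toQ (v j)) → IsBSimplex4 v)

/-- A B₁-facet: a pyramid of height 1 with base on a coordinate hyperplane. -/
def IsB1Facet (S : Finset (Fin 4 → ℤ)) : Prop :=
  ∃ i : Fin 4, ∃ q ∈ S, q i = 1 ∧ ∀ p ∈ S, p ≠ q → p i = 0

/-- A B₂-facet: its projection on some coordinate 2-plane is the triangle
`(0,0), (1,0), (0,1)`. -/
def IsB2Facet (S : Finset (Fin 4 → ℤ)) : Prop :=
  ∃ i j : Fin 4, i ≠ j ∧
    (∀ p ∈ S, (p i = 0 ∧ p j = 0) ∨ (p i = 1 ∧ p j = 0) ∨ (p i = 0 ∧ p j = 1)) ∧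
    (∃ p ∈ S, p i = 0 ∧ p j = 0) ∧ (∃ p ∈ S, p i = 1 ∧ p j = 0) ∧
    (∃ p ∈ S, p i = 0 ∧ p j = 1)

/-- A possibly degenerate B₂-facet: its projection on some coordinate 2-plane is contained
in the triangle `(0,0), (1,0), (0,1)`. -/
def IsDegB2Facet (S : Finset (Fin 4 → ℤ)) : Prop :=
  ∃ i j : Fin 4, i ≠ j ∧
    ∀ p ∈ S, (p i = 0 ∧ p j = 0) ∨ (p i = 1 ∧ p j = 0) ∨ (p i = 0 ∧ p j = 1)

/-- A flat border: after permuting coordinates, it contains a triangle `A B C` with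
`A, B` of the form `(0,0,⋆,⋆)` and `C` of the form `(1,1,⋆,⋆)`, and all the other points
are contained in `{x₁ = 0} ∪ {x₂ = 0}`. -/
def IsFlatBorder (S : Finset (Fin 4 → ℤ)) : Prop :=
  ∃ i j : Fin 4, i ≠ j ∧ ∃ A ∈ S, ∃ B ∈ S, ∃ C ∈ S,
    AffineIndependent ℚ (fun k => toQ (![A, B, C] k)) ∧
    A i = 0 ∧ A j = 0 ∧ B i = 0 ∧ B j = 0 ∧ C i = 1 ∧ C j = 1 ∧
    ∀ p ∈ S, p = C ∨ p i = 0 ∨ p j = 0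

/-- The standard cross-polytope. -/
def crossPolytope : Finset (Fin 4 → ℤ) :=
  {![1,1,0,0], ![1,0,1,0], ![1,0,0,1], ![0,1,1,0], ![0,1,0,1], ![0,0,1,1]}

/-- A flat B-border pyramid: up to a permutation of coordinates, a set of 5 points
`{(0,0,0,⋆), (0,0,a,⋆), (a,0,0,⋆), (0,1,1,⋆), (1,1,0,⋆)}` whose last four points lie in a
common affine 2-plane. -/
def IsFlatBBorderPyramid (S : Finset (Fin 4 → ℤ)) : Prop :=
  ∃ σ : Equiv.Perm (Fin 4), ∃ a c0 c1 c2 c3 c4 : ℤ, 1 ≤ a ∧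
    S.image (fun p => p ∘ σ) =
      {![0,0,0,c0], ![0,0,a,c1], ![a,0,0,c2], ![0,1,1,c3], ![1,1,0,c4]} ∧
    ¬ AffineIndependent ℚ (fun j => toQ
      ((![![0,0,a,c1], ![a,0,0,c2], ![0,1,1,c3], ![1,1,0,c4]] : Fin 4 → Fin 4 → ℤ) j))


open Finset


/-- affine dependence over ℚ, componentwise weights -/
def wdep {n : ℕ} (v : Fin n → (Fin 4 → ℚ)) : Prop :=
  ∃ w : Fin n → ℚ, w ≠ 0 ∧ ∑ j, w j = 0 ∧ ∀ m, ∑ j, w j * v j m = 0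

/-- affine dependence in the coordinates other than i -/
def vdep (i : Fin 4) {n : ℕ} (v : Fin n → (Fin 4 → ℤ)) : Prop :=
  ∃ w : Fin n → ℚ, w ≠ 0 ∧ ∑ j, w j = 0 ∧ ∀ m, m ≠ i → ∑ j, w j * (v j m : ℚ) = 0

lemma wdep_iff_not_ai {n : ℕ} (v : Fin n → (Fin 4 → ℚ)) :
    wdep v ↔ ¬ AffineIndependent ℚ v := by
  rw [affineIndependent_iff_of_fintype]
  constructor
  · rintro ⟨w, hw0, hsum, hcombo⟩ h
    apply hw0
    funext j
    refine h w hsum ?_ j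
    rw [Finset.weightedVSub_eq_linear_combination _ hsum]
    funext m
    simpa [Finset.sum_apply] using hcombo m
  · intro h
    push_neg at h
    obtain ⟨w, hsum, hcombo, j, hj⟩ := h
    refine ⟨w, fun h0 => hj (by simp [h0]), hsum, fun m => ?_⟩
    rw [Finset.weightedVSub_eq_linear_combination _ hsum] at hcombo
    have := congrFun hcombo m
    simpa [Finset.sum_apply] using this

section S

variable {S : Finset (Fin 4 → ℤ)} {i : Fin 4} {a : Fin 4 → ℤ} {b : ℤ}

/-- visible dependence iff full dependence, for points on the hyperplane -/
lemma vdep_iff_S (ha : ∀ m, 0 < a m) (hab : ∀ p ∈ S, ∑ m, a m * p m = b)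
    {n : ℕ} (v : Fin n → (Fin 4 → ℤ)) (hv : ∀ j, v j ∈ S) :
    vdep i v ↔ ¬ AffineIndependent ℚ (fun j => toQ (v j)) := by
  rw [← wdep_iff_not_ai]
  constructor
  · rintro ⟨w, hw0, hsum, hcombo⟩
    refine ⟨w, hw0, hsum, fun m => ?_⟩
    by_cases hm : m = i
    · subst hm
      have key : ∑ m', (a m' : ℚ) * (∑ j, w j * (v j m' : ℚ)) = 0 := by
        have hb : ∀ j, ∑ m', (a m' : ℚ) * (v j m' : ℚ) = (b : ℚ) := by
          intro j
          have := hab (v j) (hv j)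
          push_cast [← this]
          norm_num
        have swap : ∑ m', (a m' : ℚ) * (∑ j, w j * (v j m' : ℚ))
            = ∑ j, w j * (∑ m', (a m' : ℚ) * (v j m' : ℚ)) := by
          simp_rw [Finset.mul_sum]
          rw [Finset.sum_comm]
          exact Finset.sum_congr rfl fun _ _ => Finset.sum_congr rfl fun _ _ => by ring
        rw [swap]
        simp only [hb]
        rw [← Finset.sum_mul, hsum, zero_mul]
      rw [Finset.sum_eq_single m (fun m' _ hm' => by rw [hcombo m' hm', mul_zero])
        (by simp)] at key
      have hai : (a m : ℚ) ≠ 0 := by exact_mod_cast (ha m).ne'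
      have := (mul_eq_zero.mp key).resolve_left hai
      simpa [toQ] using this
    · simpa [toQ] using hcombo m hm
  · rintro ⟨w, hw0, hsum, hcombo⟩
    refine ⟨w, hw0, hsum, fun m _ => ?_⟩
    simpa [toQ] using hcombo m

/-- visible coordinates determine points of S -/
lemma visEq_S (ha : ∀ m, 0 < a m) (hab : ∀ p ∈ S, ∑ m, a m * p m = b)
    {p p' : Fin 4 → ℤ} (hp : p ∈ S) (hp' : p' ∈ S)
    (h : ∀ m, m ≠ i → p m = p' m) : p = p' := by
  have key : ∑ m, a m * (p m - p' m) = 0 := by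
    have := hab p hp
    have := hab p' hp'
    simp only [mul_sub, Finset.sum_sub_distrib]
    omega
  rw [Finset.sum_eq_single i (fun m' _ hm' => by rw [h m' hm']; ring)
    (by simp)] at key
  have : p i = p' i := by
    have hai := (ha i).ne'
    have := mul_eq_zero.mp key
    rcases this with h1 | h2
    · exact absurd h1 hai
    · omega
  funext m
  by_cases hm : m = i
  · rw [hm]; exact this
  · exact h m hm

end S

/-- the (1,0,0)-pattern at coordinate k -/
def pat (k : Fin 4) (A B C : Fin 4 → ℤ) : Prop :=
  (A k = 1 ∧ B k = 0 ∧ C k = 0) ∨ (B k = 1 ∧ A k = 0 ∧ C k = 0) ∨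
  (C k = 1 ∧ A k = 0 ∧ B k = 0)

lemma vdep3_iff (i : Fin 4) (A B C : Fin 4 → ℤ) :
    vdep i ![A, B, C] ↔ ∃ x y z : ℚ, ¬(x = 0 ∧ y = 0 ∧ z = 0) ∧ x + y + z = 0 ∧
      ∀ m, m ≠ i → x * A m + y * B m + z * C m = 0 := by
  constructor
  · rintro ⟨w, hw0, hsum, hcombo⟩
    refine ⟨w 0, w 1, w 2, ?_, ?_, ?_⟩
    · rintro ⟨h0, h1, h2⟩
      apply hw0; funext j; fin_cases j <;> assumption
    · simpa [Fin.sum_univ_three] using hsum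
    · intro m hm
      simpa [Fin.sum_univ_three] using hcombo m hm
  · rintro ⟨x, y, z, h0, hsum, hcombo⟩
    refine ⟨![x, y, z], ?_, ?_, ?_⟩
    · intro h
      exact h0 ⟨congrFun h 0, congrFun h 1, congrFun h 2⟩
    · simpa [Fin.sum_univ_three] using hsum
    · intro m hm
      simpa [Fin.sum_univ_three] using hcombo m hm

lemma vdep4_iff (i : Fin 4) (A B C D : Fin 4 → ℤ) :
    vdep i ![A, B, C, D] ↔ ∃ x y z t : ℚ, ¬(x = 0 ∧ y = 0 ∧ z = 0 ∧ t = 0) ∧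
      x + y + z + t = 0 ∧
      ∀ m, m ≠ i → x * A m + y * B m + z * C m + t * D m = 0 := by
  constructor
  · rintro ⟨w, hw0, hsum, hcombo⟩
    refine ⟨w 0, w 1, w 2, w 3, ?_, ?_, ?_⟩
    · rintro ⟨h0, h1, h2, h3⟩
      apply hw0; funext j; fin_cases j <;> assumption
    · simpa [Fin.sum_univ_four] using hsum
    · intro m hm
      simpa [Fin.sum_univ_four] using hcombo m hm
  · rintro ⟨x, y, z, t, h0, hsum, hcombo⟩
    refine ⟨![x, y, z, t], ?_, ?_, ?_⟩
    · intro h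
      exact h0 ⟨congrFun h 0, congrFun h 1, congrFun h 2, congrFun h 3⟩
    · simpa [Fin.sum_univ_four] using hsum
    · intro m hm
      simpa [Fin.sum_univ_four] using hcombo m hm

/-- independence from a nonzero 2x2 minor -/
lemma indep_of_det {i : Fin 4} {A B C : Fin 4 → ℤ} (p q : Fin 4) (hp : p ≠ i) (hq : q ≠ i)
    (h : (B p - A p) * (C q - A q) - (B q - A q) * (C p - A p) ≠ 0) :
    ¬ vdep i ![A, B, C] := by
  intro hd
  rw [vdep3_iff] at hd
  obtain ⟨x, y, z, h0, hsum, hcombo⟩ := hd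
  have ep := hcombo p hp
  have eq' := hcombo q hq
  have hx : x = -(y + z) := by linarith
  subst hx
  have e1 : y * ((B p : ℚ) - A p) + z * ((C p : ℚ) - A p) = 0 := by linarith
  have e2 : y * ((B q : ℚ) - A q) + z * ((C q : ℚ) - A q) = 0 := by linarith
  have hdQ : ((B p : ℚ) - A p) * ((C q : ℚ) - A q) - ((B q : ℚ) - A q) * ((C p : ℚ) - A p) ≠ 0 := by
    intro hc
    apply h
    exact_mod_cast hc
  have hy : y * (((B p : ℚ) - A p) * ((C q : ℚ) - A q) - ((B q : ℚ) - A q) * ((C p : ℚ) - A p)) = 0 := by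
    linear_combination ((C q : ℚ) - A q) * e1 - ((C p : ℚ) - A p) * e2
  have hz : z * (((B p : ℚ) - A p) * ((C q : ℚ) - A q) - ((B q : ℚ) - A q) * ((C p : ℚ) - A p)) = 0 := by
    linear_combination ((B p : ℚ) - A p) * e2 - ((B q : ℚ) - A q) * e1
  have hy0 := (mul_eq_zero.mp hy).resolve_right hdQ
  have hz0 := (mul_eq_zero.mp hz).resolve_right hdQ
  exact h0 ⟨by rw [hy0, hz0]; ring, hy0, hz0⟩

/-- vanishing 2x2 minors of dependent triples -/
lemma det0_of_vdep {i : Fin 4} {A B C : Fin 4 → ℤ} (hd : vdep i ![A, B, C])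
    (p q : Fin 4) (hp : p ≠ i) (hq : q ≠ i) :
    (B p - A p) * (C q - A q) - (B q - A q) * (C p - A p) = 0 := by
  by_contra h
  exact indep_of_det p q hp hq h hd

section Core

variable {i : Fin 4} {B : Finset (Fin 4 → ℤ)}

/-- points on a level of a coordinate are collinear -/
lemma collinear_level (hp4 : ∀ v : Fin 4 → (Fin 4 → ℤ), (∀ j, v j ∈ B) → vdep i v)
    {A C D s : Fin 4 → ℤ} (hA : A ∈ B) (hC : C ∈ B) (hD : D ∈ B) (hs : s ∈ B)
    (k : Fin 4) (hk : k ≠ i) (hCk : C k = A k) (hDk : D k = A k) (hsk : s k ≠ A k) :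
    vdep i ![A, C, D] := by
  have := hp4 ![s, A, C, D] (by intro j; fin_cases j <;> assumption)
  rw [vdep4_iff] at this
  obtain ⟨d, x, y, z, h0, hsum, hcombo⟩ := this
  have ek := hcombo k hk
  rw [hCk, hDk] at ek
  have hd : d * ((s k : ℚ) - A k) = 0 := by linear_combination ek - (A k : ℚ) * hsum
  have hsA : (s k : ℚ) - A k ≠ 0 := by
    intro hc
    apply hsk
    have : (s k : ℚ) = A k := by linarith
    exact_mod_cast this
  have hd0 := (mul_eq_zero.mp hd).resolve_right hsA
  subst hd0
  rw [vdep3_iff]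
  refine ⟨x, y, z, ?_, by linarith, ?_⟩
  · rintro ⟨hx, hy, hz⟩
    exact h0 ⟨rfl, hx, hy, hz⟩
  · intro m hm
    have := hcombo m hm
    linarith

/-- all points of B satisfy any affine equation satisfied by three independent points -/
lemma plane_eq (hp4 : ∀ v : Fin 4 → (Fin 4 → ℤ), (∀ j, v j ∈ B) → vdep i v)
    {u1 u2 u3 : Fin 4 → ℤ} (h1 : u1 ∈ B) (h2 : u2 ∈ B) (h3 : u3 ∈ B)
    (hind : ¬ vdep i ![u1, u2, u3]) (k l m : Fin 4) (hk : k ≠ i) (hl : l ≠ i) (hm : m ≠ i)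
    (α β γ d : ℚ)
    (e1 : α * u1 k + β * u1 l + γ * u1 m = d)
    (e2 : α * u2 k + β * u2 l + γ * u2 m = d)
    (e3 : α * u3 k + β * u3 l + γ * u3 m = d) :
    ∀ p ∈ B, α * p k + β * p l + γ * p m = d := by
  intro p hpB
  have := hp4 ![p, u1, u2, u3] (by intro j; fin_cases j <;> assumption)
  rw [vdep4_iff] at this
  obtain ⟨w, x, y, z, h0, hsum, hcombo⟩ := this
  have hw : w ≠ 0 := by
    intro hw0
    subst hw0
    apply hind
    rw [vdep3_iff]
    refine ⟨x, y, z, ?_, by linarith, ?_⟩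
    · rintro ⟨hx, hy, hz⟩
      exact h0 ⟨rfl, hx, hy, hz⟩
    · intro m' hm'
      have := hcombo m' hm'
      linarith
  have ek := hcombo k hk
  have el := hcombo l hl
  have em := hcombo m hm
  have key : w * (α * p k + β * p l + γ * p m - d) = 0 := by
    linear_combination α * ek + β * el + γ * em - x * e1 - y * e2 - z * e3 - d * hsum
  have := (mul_eq_zero.mp key).resolve_left hw
  linarith

end Core

lemma visible_cases {i k l m j : Fin 4} (hkl : k ≠ l) (hkm : k ≠ m) (hlm : l ≠ m)
    (hki : k ≠ i) (hli : l ≠ i) (hmi : m ≠ i) (hj : j ≠ i) : j = k ∨ j = l ∨ j = m := by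
  have h1 := k.isLt; have h2 := l.isLt; have h3 := m.isLt; have h4 := i.isLt
  have h5 := j.isLt
  simp only [Fin.ne_iff_vne] at hkl hkm hlm hki hli hmi hj
  simp only [Fin.ext_iff]
  omega

/-- the permutation 0↦k 1↦l 2↦m 3↦i -/
noncomputable def mkPerm (k l m i : Fin 4) (hkl : k ≠ l) (hkm : k ≠ m) (hlm : l ≠ m)
    (hki : k ≠ i) (hli : l ≠ i) (hmi : m ≠ i) : Equiv.Perm (Fin 4) :=
  Equiv.ofBijective ![k, l, m, i] (by
    rw [Fintype.bijective_iff_injective_and_card]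
    refine ⟨?_, rfl⟩
    intro x y h
    fin_cases x <;> fin_cases y <;> simp_all <;>
      first
        | rfl
        | (exfalso; revert h; simp [hkl, hkm, hlm, hki, hli, hmi, hkl.symm, hkm.symm,
            hlm.symm, hki.symm, hli.symm, hmi.symm]))

lemma mkPerm_apply (k l m i : Fin 4) (hkl : k ≠ l) (hkm : k ≠ m) (hlm : l ≠ m)
    (hki : k ≠ i) (hli : l ≠ i) (hmi : m ≠ i) :
    mkPerm k l m i hkl hkm hlm hki hli hmi 0 = k ∧
    mkPerm k l m i hkl hkm hlm hki hli hmi 1 = l ∧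
    mkPerm k l m i hkl hkm hlm hki hli hmi 2 = m ∧
    mkPerm k l m i hkl hkm hlm hki hli hmi 3 = i := by
  refine ⟨rfl, rfl, rfl, rfl⟩

lemma span3 {i : Fin 4} (u : Fin 3 → (Fin 4 → ℤ)) (v : Fin 4 → (Fin 4 → ℤ))
    (hc : ∀ j, ∃ c : Fin 3 → ℚ, (∑ k, c k) = 1 ∧
      ∀ m, m ≠ i → (v j m : ℚ) = ∑ k, c k * u k m) :
    vdep i v := by
  choose c hc1 hc2 using hc
  have hdep : ¬ LinearIndependent ℚ c := by
    intro h
    have := h.fintype_card_le_finrank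
    rw [Module.finrank_fin_fun] at this
    simp at this
  rw [Fintype.linearIndependent_iff] at hdep
  push_neg at hdep
  obtain ⟨g, hg, j0, hj0⟩ := hdep
  refine ⟨g, fun h0 => hj0 (by rw [h0]; rfl), ?_, ?_⟩
  · have : ∀ j, g j = ∑ k, g j * c j k := by
      intro j
      rw [← Finset.mul_sum, hc1 j, mul_one]
    calc ∑ j, g j = ∑ j, ∑ k, g j * c j k := Finset.sum_congr rfl fun j _ => this j
      _ = ∑ k, ∑ j, g j * c j k := Finset.sum_comm
      _ = 0 := by
          refine Finset.sum_eq_zero fun k _ => ?_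
          have := congrFun hg k
          simpa [Finset.sum_apply] using this
  · intro m hm
    calc ∑ j, g j * (v j m : ℚ) = ∑ j, ∑ k, g j * (c j k * u k m) := by
          refine Finset.sum_congr rfl fun j _ => ?_
          rw [hc2 j m hm, Finset.mul_sum]
          try exact Finset.sum_congr rfl fun k _ => by ring
      _ = ∑ k, ∑ j, g j * (c j k * u k m) := Finset.sum_comm
      _ = 0 := by
          refine Finset.sum_eq_zero fun k _ => ?_
          have h' : (∑ j, g j * c j k) = 0 := by
            have := congrFun hg k
            simpa [Finset.sum_apply] using this
          calc ∑ j, g j * (c j k * u k m) = (∑ j, g j * c j k) * u k m := by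
                rw [Finset.sum_mul]
                exact Finset.sum_congr rfl fun j _ => by ring
            _ = 0 := by rw [h', zero_mul]

lemma combo_of_vdep4 {i : Fin 4} {A u1 u2 u3 : Fin 4 → ℤ} (h : vdep i ![A, u1, u2, u3])
    (hind : ¬ vdep i ![u1, u2, u3]) :
    ∃ c : Fin 3 → ℚ, (∑ k, c k) = 1 ∧
      ∀ m, m ≠ i → (A m : ℚ) = ∑ k, c k * (![u1, u2, u3] k m : ℚ) := by
  rw [vdep4_iff] at h
  obtain ⟨w, x, y, z, h0, hsum, hcombo⟩ := h
  have hw : w ≠ 0 := by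
    intro hw0
    subst hw0
    apply hind
    rw [vdep3_iff]
    exact ⟨x, y, z, fun ⟨hx, hy, hz⟩ => h0 ⟨rfl, hx, hy, hz⟩, by linarith,
      fun m hm => by have := hcombo m hm; linarith⟩
  refine ⟨![-x/w, -y/w, -z/w], ?_, ?_⟩
  · rw [Fin.sum_univ_three]
    simp only [Matrix.cons_val_zero, Matrix.cons_val_one, Matrix.head_cons,
      Matrix.cons_val_two, Matrix.tail_cons]
    rw [← add_div, ← add_div]
    rw [div_eq_one_iff_eq hw]
    linarith
  · intro m hm
    have hc := hcombo m hm
    rw [Fin.sum_univ_three]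
    simp only [Matrix.cons_val_zero, Matrix.cons_val_one, Matrix.head_cons,
      Matrix.cons_val_two, Matrix.tail_cons]
    rw [div_mul_eq_mul_div, div_mul_eq_mul_div, div_mul_eq_mul_div,
      ← add_div, ← add_div, eq_div_iff hw]
    linarith

section Setup

variable {S : Finset (Fin 4 → ℤ)} {i : Fin 4} {Q : Fin 4 → ℤ} {a : Fin 4 → ℤ} {b : ℤ}

/-- every quadruple from the base is (visibly) dependent -/
lemma base_dep4 (ha : ∀ m, 0 < a m) (hab : ∀ p ∈ S, ∑ m, a m * p m = b)
    (hplanar : ∀ v : Fin 4 → (Fin 4 → ℤ), (∀ k, v k ∈ S.erase Q) →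
      ¬ AffineIndependent ℚ (fun k => toQ (v k))) :
    ∀ v : Fin 4 → (Fin 4 → ℤ), (∀ j, v j ∈ S.erase Q) → vdep i v := by
  intro v hv
  rw [vdep_iff_S (i := i) ha hab v (fun j => Finset.mem_of_mem_erase (hv j))]
  exact hplanar v hv

/-- a visibly independent triple of the base together with Q is affinely independent -/
lemma key_indep (ha : ∀ m, 0 < a m) (hab : ∀ p ∈ S, ∑ m, a m * p m = b)
    (hQ : Q ∈ S) (hQv : ∀ m, m ≠ i → Q m = 0)
    (h3d : ∃ v : Fin 4 → (Fin 4 → ℤ), (∀ j, v j ∈ S) ∧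
      AffineIndependent ℚ (fun j => toQ (v j)))
    (hplanar : ∀ v : Fin 4 → (Fin 4 → ℤ), (∀ k, v k ∈ S.erase Q) →
      ¬ AffineIndependent ℚ (fun k => toQ (v k)))
    {A A' A'' : Fin 4 → ℤ} (hA : A ∈ S.erase Q) (hA' : A' ∈ S.erase Q)
    (hA'' : A'' ∈ S.erase Q) (hind : ¬ vdep i ![A, A', A'']) :
    AffineIndependent ℚ (fun j => toQ (![Q, A, A', A''] j)) := by
  by_contra hdep
  rw [← vdep_iff_S (i := i) ha hab _ (by
    intro j
    fin_cases j
    · exact hQ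
    · exact Finset.mem_of_mem_erase hA
    · exact Finset.mem_of_mem_erase hA'
    · exact Finset.mem_of_mem_erase hA'')] at hdep
  rw [vdep4_iff] at hdep
  obtain ⟨lam, x, y, z, h0, hsum, hcombo⟩ := hdep
  have hlam : lam ≠ 0 := by
    intro h
    subst h
    apply hind
    rw [vdep3_iff]
    exact ⟨x, y, z, fun ⟨hx, hy, hz⟩ => h0 ⟨rfl, hx, hy, hz⟩, by linarith,
      fun m hm => by have := hcombo m hm; rw [hQv m hm] at this; push_cast at this; linarith⟩
  obtain ⟨v, hvS, hvAI⟩ := h3d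
  have : vdep i v := by
    apply span3 ![A, A', A''] v
    intro j
    by_cases hj : v j = Q
    · refine ⟨![-x/lam, -y/lam, -z/lam], ?_, ?_⟩
      · rw [Fin.sum_univ_three]
        simp only [Matrix.cons_val_zero, Matrix.cons_val_one, Matrix.head_cons,
          Matrix.cons_val_two, Matrix.tail_cons]
        rw [← add_div, ← add_div, div_eq_one_iff_eq hlam]
        linarith
      · intro m hm
        have hc := hcombo m hm
        rw [hQv m hm] at hc
        push_cast at hc
        rw [hj, hQv m hm, Fin.sum_univ_three]
        simp only [Matrix.cons_val_zero, Matrix.cons_val_one, Matrix.head_cons,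
          Matrix.cons_val_two, Matrix.tail_cons]
        push_cast
        rw [div_mul_eq_mul_div, div_mul_eq_mul_div, div_mul_eq_mul_div,
          ← add_div, ← add_div]
        rw [eq_comm, div_eq_iff hlam]
        linarith
    · have hjB : v j ∈ S.erase Q := Finset.mem_erase.mpr ⟨hj, hvS j⟩
      exact combo_of_vdep4
        (base_dep4 ha hab hplanar ![v j, A, A', A''] (by
          intro j'
          fin_cases j' <;> assumption)) hind
  rw [vdep_iff_S (i := i) ha hab v hvS] at this
  exact this hvAI

end Setup

section Setup2

variable {S : Finset (Fin 4 → ℤ)} {i : Fin 4} {Q : Fin 4 → ℤ} {a : Fin 4 → ℤ} {b : ℤ}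

/-- the fundamental pattern property of visibly independent triples in the base -/
lemma base_pat (ha : ∀ m, 0 < a m) (hab : ∀ p ∈ S, ∑ m, a m * p m = b)
    (hQ : Q ∈ S) (hQv : ∀ m, m ≠ i → Q m = 0) (hQi : 2 ≤ Q i)
    (h3d : ∃ v : Fin 4 → (Fin 4 → ℤ), (∀ j, v j ∈ S) ∧
      AffineIndependent ℚ (fun j => toQ (v j)))
    (hplanar : ∀ v : Fin 4 → (Fin 4 → ℤ), (∀ k, v k ∈ S.erase Q) →
      ¬ AffineIndependent ℚ (fun k => toQ (v k)))
    (hBsimp : ∀ v : Fin 4 → (Fin 4 → ℤ), (∀ j, v j ∈ S) →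
      AffineIndependent ℚ (fun j => toQ (v j)) → IsBSimplex4 v)
    {A A' A'' : Fin 4 → ℤ} (hA : A ∈ S.erase Q) (hA' : A' ∈ S.erase Q)
    (hA'' : A'' ∈ S.erase Q) (hind : ¬ vdep i ![A, A', A'']) :
    ∃ k, k ≠ i ∧ pat k A A' A'' := by
  have hAI := key_indep ha hab hQ hQv h3d hplanar hA hA' hA'' hind
  have hmem : ∀ j, (![Q, A, A', A''] : Fin 4 → Fin 4 → ℤ) j ∈ S := by
    intro j
    fin_cases j
    · exact hQ
    · exact Finset.mem_of_mem_erase hA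
    · exact Finset.mem_of_mem_erase hA'
    · exact Finset.mem_of_mem_erase hA''
  obtain ⟨k, ap, h1, h0⟩ := hBsimp _ hmem hAI
  have hki : k ≠ i := by
    intro hk
    subst hk
    by_cases hap : ap = 0
    · subst hap
      simp at h1
      omega
    · have := h0 0 (fun h => hap h.symm)
      simp at this
      omega
  refine ⟨k, hki, ?_⟩
  have hap0 : ap ≠ 0 := by
    intro h
    subst h
    simp at h1
    rw [hQv k hki] at h1
    exact absurd h1 (by norm_num)
  unfold pat
  fin_cases ap
  · exact absurd rfl hap0
  · left
    refine ⟨by simpa using h1, ?_, ?_⟩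
    · have := h0 2 (by decide)
      simpa using this
    · have := h0 3 (by decide)
      simpa using this
  · right; left
    refine ⟨by simpa using h1, ?_, ?_⟩
    · have := h0 1 (by decide)
      simpa using this
    · have := h0 3 (by decide)
      simpa using this
  · right; right
    refine ⟨by simpa using h1, ?_, ?_⟩
    · have := h0 1 (by decide)
      simpa using this
    · have := h0 2 (by decide)
      simpa using this

/-- a visibly independent triple exists in the base -/
lemma base_exists (ha : ∀ m, 0 < a m) (hab : ∀ p ∈ S, ∑ m, a m * p m = b)
    (hbase2 : ∃ w : Fin 3 → (Fin 4 → ℤ), (∀ k, w k ∈ S.erase Q) ∧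
      AffineIndependent ℚ (fun k => toQ (w k))) :
    ∃ A A' A'', A ∈ S.erase Q ∧ A' ∈ S.erase Q ∧ A'' ∈ S.erase Q ∧
      ¬ vdep i ![A, A', A''] := by
  obtain ⟨w, hw, hAI⟩ := hbase2
  refine ⟨w 0, w 1, w 2, hw 0, hw 1, hw 2, ?_⟩
  rw [vdep_iff_S (i := i) ha hab _ (by
    intro j; fin_cases j <;> exact Finset.mem_of_mem_erase (hw _))]
  intro h
  apply h
  have : (fun j => toQ (![w 0, w 1, w 2] j)) = fun k => toQ (w k) := by
    funext j
    fin_cases j <;> rfl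
  rw [this]
  exact hAI

end Setup2

lemma vdep3_swap01 {i : Fin 4} {A B C : Fin 4 → ℤ} (h : vdep i ![A, B, C]) :
    vdep i ![B, A, C] := by
  rw [vdep3_iff] at h ⊢
  obtain ⟨a, b, c, h0, hs, hc⟩ := h
  exact ⟨b, a, c, fun ⟨h1, h2, h3⟩ => h0 ⟨h2, h1, h3⟩, by linarith,
    fun m hm => by have := hc m hm; linarith⟩

lemma vdep3_rot {i : Fin 4} {A B C : Fin 4 → ℤ} (h : vdep i ![A, B, C]) :
    vdep i ![C, A, B] := by
  rw [vdep3_iff] at h ⊢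
  obtain ⟨a, b, c, h0, hs, hc⟩ := h
  exact ⟨c, a, b, fun ⟨h1, h2, h3⟩ => h0 ⟨h2, h3, h1⟩, by linarith,
    fun m hm => by have := hc m hm; linarith⟩

lemma vdep3_swap12 {i : Fin 4} {A B C : Fin 4 → ℤ} (h : vdep i ![A, B, C]) :
    vdep i ![A, C, B] := by
  exact vdep3_swap01 (vdep3_rot h)

/-- two points with all visible coordinates equal give a dependent triple with anything -/
lemma vdep3_of_visEq {i : Fin 4} {A B C : Fin 4 → ℤ} (h : ∀ m, m ≠ i → B m = C m) :
    vdep i ![A, B, C] := by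
  rw [vdep3_iff]
  refine ⟨0, 1, -1, by norm_num, by norm_num, fun m hm => by rw [h m hm]; ring⟩

lemma other_two : ∀ i k : Fin 4, k ≠ i → ∃ x y : Fin 4,
    x ≠ y ∧ x ≠ k ∧ y ≠ k ∧ x ≠ i ∧ y ≠ i := by decide

/-- visibility structure: x y z are the coordinates other than i -/
structure Vis (i x y z : Fin 4) : Prop where
  xy : x ≠ y
  xz : x ≠ z
  yz : y ≠ z
  xi : x ≠ i
  yi : y ≠ i
  zi : z ≠ i

lemma Vis.swapxy {i x y z : Fin 4} (h : Vis i x y z) : Vis i y x z :=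
  ⟨h.xy.symm, h.yz, h.xz, h.yi, h.xi, h.zi⟩

lemma Vis.cases {i x y z : Fin 4} (h : Vis i x y z) {j : Fin 4} (hj : j ≠ i) :
    j = x ∨ j = y ∨ j = z :=
  visible_cases h.xy h.xz h.yz h.xi h.yi h.zi hj

/-- the hypotheses of the combinatorial core -/
structure CoreHyp (i : Fin 4) (B : Finset (Fin 4 → ℤ)) : Prop where
  nn : ∀ p ∈ B, ∀ m, 0 ≤ p m
  inj : ∀ p ∈ B, ∀ q ∈ B, (∀ m, m ≠ i → p m = q m) → p = q
  dep4 : ∀ v : Fin 4 → (Fin 4 → ℤ), (∀ j, v j ∈ B) → vdep i v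
  pat3 : ∀ A ∈ B, ∀ A' ∈ B, ∀ A'' ∈ B, ¬ vdep i ![A, A', A''] →
    ∃ k, k ≠ i ∧ pat k A A' A''

lemma CoreHyp.ne3 {i x y z : Fin 4} {B : Finset (Fin 4 → ℤ)} (h : CoreHyp i B)
    (hv : Vis i x y z) {p q : Fin 4 → ℤ} (hp : p ∈ B) (hq : q ∈ B) (hne : p ≠ q) :
    p x ≠ q x ∨ p y ≠ q y ∨ p z ≠ q z := by
  by_contra hc
  push_neg at hc
  obtain ⟨h1, h2, h3⟩ := hc
  refine hne (h.inj p hp q hq fun m hm => ?_)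
  rcases hv.cases hm with rfl | rfl | rfl <;> assumption

def B1v (i : Fin 4) (B : Finset (Fin 4 → ℤ)) : Prop :=
  ∃ k, k ≠ i ∧ ∃ q ∈ B, q k = 1 ∧ ∀ p ∈ B, p ≠ q → p k = 0

def D2v (i : Fin 4) (B : Finset (Fin 4 → ℤ)) : Prop :=
  ∃ k l : Fin 4, k ≠ i ∧ l ≠ i ∧ k ≠ l ∧
    ∀ p ∈ B, (p k = 0 ∧ p l = 0) ∨ (p k = 1 ∧ p l = 0) ∨ (p k = 0 ∧ p l = 1)

def FlatV (i : Fin 4) (B : Finset (Fin 4 → ℤ)) : Prop :=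
  ∃ σ : Equiv.Perm (Fin 4), σ 3 = i ∧ ∃ a c1 c2 c3 c4 : ℤ, 1 ≤ a ∧
    B.image (fun p => p ∘ σ) =
      {![0, 0, a, c1], ![a, 0, 0, c2], ![0, 1, 1, c3], ![1, 1, 0, c4]}

def CoreConcl (i : Fin 4) (B : Finset (Fin 4 → ℤ)) : Prop :=
  B1v i B ∨ D2v i B ∨ FlatV i B



section TwoDim

variable {i x y z : Fin 4} {B : Finset (Fin 4 → ℤ)}

/-- Case A of the 2-dimensional lemma -/
lemma two_dimA (h : CoreHyp i B) (hv : Vis i x y z)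
    (patxy : ∀ A ∈ B, ∀ A' ∈ B, ∀ A'' ∈ B, ¬ vdep i ![A, A', A''] →
      pat x A A' A'' ∨ pat y A A' A'')
    (hconst : ∀ p ∈ B, ∀ q ∈ B, p z = q z)
    {P1 Pa Pb R : Fin 4 → ℤ} (hP1 : P1 ∈ B) (hPa : Pa ∈ B) (hPb : Pb ∈ B) (hR : R ∈ B)
    (hP1x : P1 x = 1) (hPax : Pa x = 0) (hPay : Pa y = 0)
    (hPbx : Pb x = 0) (hPby : Pb y = 1)
    (hRx0 : R x ≠ 0) (hRx1 : R x ≠ 1) (hRy : R y = 0) : CoreConcl i B := by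
  have hRx2 : 2 ≤ R x := by
    have := h.nn R hR x
    omega
  -- Step 1 : P1 y = 0
  have hP1y : P1 y = 0 := by
    by_contra hq
    have hind : ¬ vdep i ![P1, R, Pa] := by
      apply indep_of_det x y hv.xi hv.yi
      have : (R x - P1 x) * (Pa y - P1 y) - (R y - P1 y) * (Pa x - P1 x)
          = -(P1 y * (R x)) := by
        rw [hP1x, hPax, hPay, hRy]; ring
      rw [this]
      exact neg_ne_zero.mpr (mul_ne_zero hq hRx0)
    have hq1 : P1 y = 1 := by
      rcases patxy P1 hP1 R hR Pa hPa hind with hp | hp <;>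
        rcases hp with ⟨h1, h2, h3⟩ | ⟨h1, h2, h3⟩ | ⟨h1, h2, h3⟩ <;> omega
    have hind2 : ¬ vdep i ![P1, R, Pb] := by
      apply indep_of_det x y hv.xi hv.yi
      have : (R x - P1 x) * (Pb y - P1 y) - (R y - P1 y) * (Pb x - P1 x) = -1 := by
        rw [hP1x, hPbx, hPby, hRy, hq1]; ring
      rw [this]; norm_num
    rcases patxy P1 hP1 R hR Pb hPb hind2 with hp | hp <;>
      rcases hp with ⟨h1, h2, h3⟩ | ⟨h1, h2, h3⟩ | ⟨h1, h2, h3⟩ <;> omega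
  -- Step 2 : every point with nonzero y-coordinate is Pb
  have claim : ∀ p ∈ B, p y ≠ 0 → p = Pb := by
    intro p hp hpy
    have hpy1 : 1 ≤ p y := by have := h.nn p hp y; omega
    by_cases hpx : p x = 0
    · have hind : ¬ vdep i ![p, R, P1] := by
        apply indep_of_det x y hv.xi hv.yi
        have : (R x - p x) * (P1 y - p y) - (R y - p y) * (P1 x - p x)
            = -(p y * (R x - 1)) := by
          rw [hP1x, hP1y, hRy, hpx]; ring
        rw [this]
        refine neg_ne_zero.mpr (mul_ne_zero hpy ?_)
        omega
      have hpy' : p y = 1 := by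
        rcases patxy p hp R hR P1 hP1 hind with hp' | hp' <;>
          rcases hp' with ⟨h1, h2, h3⟩ | ⟨h1, h2, h3⟩ | ⟨h1, h2, h3⟩ <;> omega
      apply h.inj p hp Pb hPb
      intro m hm
      rcases hv.cases hm with rfl | rfl | rfl
      · omega
      · omega
      · exact hconst p hp Pb hPb
    · have hind : ¬ vdep i ![p, Pa, Pb] := by
        apply indep_of_det x y hv.xi hv.yi
        have : (Pa x - p x) * (Pb y - p y) - (Pa y - p y) * (Pb x - p x) = -(p x) := by
          rw [hPax, hPay, hPbx, hPby]; ring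
        rw [this]
        exact neg_ne_zero.mpr hpx
      have hpx1 : p x = 1 := by
        rcases patxy p hp Pa hPa Pb hPb hind with hp' | hp' <;>
          rcases hp' with ⟨h1, h2, h3⟩ | ⟨h1, h2, h3⟩ | ⟨h1, h2, h3⟩ <;> omega
      exfalso
      have hind2 : ¬ vdep i ![p, R, Pb] := by
        apply indep_of_det x y hv.xi hv.yi
        have hle : (R x - p x) * (Pb y - p y) - (R y - p y) * (Pb x - p x)
            = (R x - 1) * (1 - p y) - p y := by
          rw [hpx1, hPbx, hPby, hRy]; ring
        rw [hle]
        have h1 : (R x - 1) * (1 - p y) ≤ 1 * (1 - p y) := by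
          apply mul_le_mul_of_nonpos_right (by omega) (by omega)
        omega
      rcases patxy p hp R hR Pb hPb hind2 with hp' | hp' <;>
        rcases hp' with ⟨h1, h2, h3⟩ | ⟨h1, h2, h3⟩ | ⟨h1, h2, h3⟩ <;> omega
  left
  exact ⟨y, hv.yi, Pb, hPb, hPby, fun p hp hne => by
    by_contra h0; exact hne (claim p hp h0)⟩

end TwoDim


section TwoDim2

variable {i x y z : Fin 4} {B : Finset (Fin 4 → ℤ)}

/-- when the z-coordinate is constant, patterns happen at x or y -/
lemma pat_xy (h : CoreHyp i B) (hv : Vis i x y z)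
    (hconst : ∀ p ∈ B, ∀ q ∈ B, p z = q z) :
    ∀ A ∈ B, ∀ A' ∈ B, ∀ A'' ∈ B, ¬ vdep i ![A, A', A''] →
      pat x A A' A'' ∨ pat y A A' A'' := by
  intro A hA A' hA' A'' hA'' hind
  obtain ⟨k, hk, hp⟩ := h.pat3 A hA A' hA' A'' hA'' hind
  rcases hv.cases hk with rfl | rfl | rfl
  · exact Or.inl hp
  · exact Or.inr hp
  · exfalso
    have e1 := hconst A hA A' hA'
    have e2 := hconst A hA A'' hA''
    rcases hp with ⟨h1, h2, h3⟩ | ⟨h1, h2, h3⟩ | ⟨h1, h2, h3⟩ <;> omega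

/-- the 2-dimensional lemma -/
lemma two_dim (h : CoreHyp i B) (hv : Vis i x y z)
    (hconst : ∀ p ∈ B, ∀ q ∈ B, p z = q z)
    {P1 P2 P3 : Fin 4 → ℤ} (hP1 : P1 ∈ B) (hP2 : P2 ∈ B) (hP3 : P3 ∈ B)
    (hind : ¬ vdep i ![P1, P2, P3])
    (hP1x : P1 x = 1) (hP2x : P2 x = 0) (hP3x : P3 x = 0) : CoreConcl i B := by
  have patxy := pat_xy h hv hconst
  have hP23 : P2 ≠ P3 := by
    rintro rfl
    exact hind (vdep3_of_visEq fun m hm => rfl)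
  have hyy : P2 y ≠ P3 y := by
    rcases h.ne3 hv hP2 hP3 hP23 with h' | h' | h'
    · omega
    · exact h'
    · exact absurd (hconst P2 hP2 P3 hP3) h'
  by_cases hB1 : ∀ p ∈ B, p ≠ P1 → p x = 0
  · exact Or.inl ⟨x, hv.xi, P1, hP1, hP1x, hB1⟩
  push_neg at hB1
  obtain ⟨R, hR, hRP1, hRx⟩ := hB1
  by_cases hA : ∃ R' ∈ B, R' ≠ P1 ∧ R' x ≠ 0 ∧ R' x ≠ 1
  · obtain ⟨R', hR', _, hR'0, hR'1⟩ := hA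
    have hind' : ¬ vdep i ![R', P2, P3] := by
      apply indep_of_det x y hv.xi hv.yi
      have : (P2 x - R' x) * (P3 y - R' y) - (P2 y - R' y) * (P3 x - R' x)
          = -(R' x * (P3 y - P2 y)) := by
        rw [hP2x, hP3x]; ring
      rw [this]
      exact neg_ne_zero.mpr (mul_ne_zero hR'0 (by omega))
    rcases patxy R' hR' P2 hP2 P3 hP3 hind' with hp | hp
    · exfalso
      rcases hp with ⟨h1, h2, h3⟩ | ⟨h1, h2, h3⟩ | ⟨h1, h2, h3⟩ <;> omega
    · rcases hp with ⟨h1, h2, h3⟩ | ⟨h1, h2, h3⟩ | ⟨h1, h2, h3⟩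
      · omega
      · exact two_dimA h hv patxy hconst hP1 hP3 hP2 hR' hP1x hP3x h3 hP2x h1 hR'0 hR'1 h2
      · exact two_dimA h hv patxy hconst hP1 hP2 hP3 hR' hP1x hP2x h3 hP3x h1 hR'0 hR'1 h2
  · push_neg at hA
    have hRx1 : R x = 1 := hA R hR hRP1 hRx
    have hqt : P1 y ≠ R y := by
      rcases h.ne3 hv hP1 hR (Ne.symm hRP1) with h' | h' | h'
      · omega
      · exact h'
      · exact absurd (hconst P1 hP1 R hR) h'
    exfalso
    have key : ∀ W ∈ B, W x = 0 → W y = 0 := by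
      intro W hW hWx
      have hind' : ¬ vdep i ![P1, R, W] := by
        apply indep_of_det x y hv.xi hv.yi
        have : (R x - P1 x) * (W y - P1 y) - (R y - P1 y) * (W x - P1 x)
            = R y - P1 y := by
          rw [hP1x, hRx1, hWx]; ring
        rw [this]
        omega
      rcases patxy P1 hP1 R hR W hW hind' with hp | hp <;>
        rcases hp with ⟨h1, h2, h3⟩ | ⟨h1, h2, h3⟩ | ⟨h1, h2, h3⟩ <;> omega
    have := key P2 hP2 hP2x
    have := key P3 hP3 hP3x
    omega

/-- a constant visible coordinate implies the conclusion -/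
lemma const_coord (h : CoreHyp i B)
    (he : ∃ A, A ∈ B ∧ ∃ A', A' ∈ B ∧ ∃ A'', A'' ∈ B ∧ ¬ vdep i ![A, A', A''])
    (k : Fin 4) (hk : k ≠ i) (hconst : ∀ p ∈ B, ∀ q ∈ B, p k = q k) : CoreConcl i B := by
  obtain ⟨x0, y0, hxy, hxk, hyk, hxi, hyi⟩ := other_two i k hk
  have hv : Vis i x0 y0 k := ⟨hxy, hxk, hyk, hxi, hyi, hk⟩
  obtain ⟨A, hA, A', hA', A'', hA'', hind⟩ := he
  rcases pat_xy h hv hconst A hA A' hA' A'' hA'' hind with hp | hp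
  · rcases hp with ⟨h1, h2, h3⟩ | ⟨h1, h2, h3⟩ | ⟨h1, h2, h3⟩
    · exact two_dim h hv hconst hA hA' hA'' hind h1 h2 h3
    · exact two_dim h hv hconst hA' hA hA''
        (fun hd => hind (vdep3_swap01 hd)) h1 h2 h3
    · exact two_dim h hv hconst hA'' hA hA'
        (fun hd => hind (vdep3_rot (vdep3_rot hd))) h1 h2 h3
  · rcases hp with ⟨h1, h2, h3⟩ | ⟨h1, h2, h3⟩ | ⟨h1, h2, h3⟩
    · exact two_dim h hv.swapxy (hconst) hA hA' hA'' hind h1 h2 h3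
    · exact two_dim h hv.swapxy (hconst) hA' hA hA''
        (fun hd => hind (vdep3_swap01 hd)) h1 h2 h3
    · exact two_dim h hv.swapxy (hconst) hA'' hA hA'
        (fun hd => hind (vdep3_rot (vdep3_rot hd))) h1 h2 h3

end TwoDim2


lemma pat_comm {k : Fin 4} {A B C : Fin 4 → ℤ} (h : pat k A B C) : pat k B A C := by
  unfold pat at *
  tauto

section Flat

variable {i x y z : Fin 4} {B : Finset (Fin 4 → ℤ)}

/-- recognizing the flat configuration -/
lemma mkFlat (hv : Vis i x y z) {b1 b2 b3 b4 : Fin 4 → ℤ} {a : ℤ}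
    (m1 : b1 ∈ B) (m2 : b2 ∈ B) (m3 : b3 ∈ B) (m4 : b4 ∈ B) (ha : 1 ≤ a)
    (e1x : b1 x = 0) (e1y : b1 y = 0) (e1z : b1 z = a)
    (e2x : b2 x = a) (e2y : b2 y = 0) (e2z : b2 z = 0)
    (e3x : b3 x = 0) (e3y : b3 y = 1) (e3z : b3 z = 1)
    (e4x : b4 x = 1) (e4y : b4 y = 1) (e4z : b4 z = 0)
    (hall : ∀ p ∈ B, p = b1 ∨ p = b2 ∨ p = b3 ∨ p = b4) : FlatV i B := by
  set σ := mkPerm x y z i hv.xy hv.xz hv.yz hv.xi hv.yi hv.zi with hσ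
  obtain ⟨s0, s1, s2, s3⟩ := mkPerm_apply x y z i hv.xy hv.xz hv.yz hv.xi hv.yi hv.zi
  have h1 : b1 ∘ σ = ![0, 0, a, b1 i] := by
    funext m
    fin_cases m
    · show b1 (σ 0) = (0 : ℤ); rw [s0]; exact e1x
    · show b1 (σ 1) = (0 : ℤ); rw [s1]; exact e1y
    · show b1 (σ 2) = (a : ℤ); rw [s2]; exact e1z
    · show b1 (σ 3) = b1 i; rw [s3]
  have h2 : b2 ∘ σ = ![a, 0, 0, b2 i] := by
    funext m
    fin_cases m
    · show b2 (σ 0) = (a : ℤ); rw [s0]; exact e2x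
    · show b2 (σ 1) = (0 : ℤ); rw [s1]; exact e2y
    · show b2 (σ 2) = (0 : ℤ); rw [s2]; exact e2z
    · show b2 (σ 3) = b2 i; rw [s3]
  have h3 : b3 ∘ σ = ![0, 1, 1, b3 i] := by
    funext m
    fin_cases m
    · show b3 (σ 0) = (0 : ℤ); rw [s0]; exact e3x
    · show b3 (σ 1) = (1 : ℤ); rw [s1]; exact e3y
    · show b3 (σ 2) = (1 : ℤ); rw [s2]; exact e3z
    · show b3 (σ 3) = b3 i; rw [s3]
  have h4 : b4 ∘ σ = ![1, 1, 0, b4 i] := by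
    funext m
    fin_cases m
    · show b4 (σ 0) = (1 : ℤ); rw [s0]; exact e4x
    · show b4 (σ 1) = (1 : ℤ); rw [s1]; exact e4y
    · show b4 (σ 2) = (0 : ℤ); rw [s2]; exact e4z
    · show b4 (σ 3) = b4 i; rw [s3]
  refine ⟨σ, s3, a, b1 i, b2 i, b3 i, b4 i, ha, ?_⟩
  apply Finset.Subset.antisymm
  · intro q hq
    rw [Finset.mem_image] at hq
    obtain ⟨p, hp, rfl⟩ := hq
    rcases hall p hp with rfl | rfl | rfl | rfl <;>
      simp [h1, h2, h3, h4]
  · intro q hq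
    simp only [Finset.mem_insert, Finset.mem_singleton] at hq
    rw [Finset.mem_image]
    rcases hq with rfl | rfl | rfl | rfl
    · exact ⟨b1, m1, h1⟩
    · exact ⟨b2, m2, h2⟩
    · exact ⟨b3, m3, h3⟩
    · exact ⟨b4, m4, h4⟩

end Flat


section CaseC2

variable {i x y z : Fin 4} {B : Finset (Fin 4 → ℤ)}

/-- C2 leaf: U = {(0,0,1),(0,1,1)} -/
lemma leafC2a (h : CoreHyp i B) (hv : Vis i x y z)
    (hz01 : ∀ p ∈ B, p z = 0 ∨ p z = 1)
    {T0 T1 : Fin 4 → ℤ} (hT0 : T0 ∈ B) (hT1 : T1 ∈ B)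
    (hU2 : ∀ p ∈ B, p z = 1 → p = T0 ∨ p = T1)
    (patW : ∀ W ∈ B, W z = 0 → pat x T0 T1 W ∨ pat y T0 T1 W)
    (hT0x : T0 x = 0) (hT0y : T0 y = 0) (hT0z : T0 z = 1)
    (hT1x : T1 x = 0) (hT1y : T1 y = 1) (hT1z : T1 z = 1) : CoreConcl i B := by
  by_cases hallx : ∀ W ∈ B, W z = 0 → W x = 1
  · right; left
    refine ⟨x, z, hv.xi, hv.zi, hv.xz, fun p hp => ?_⟩
    rcases hz01 p hp with h0 | h1
    · exact Or.inr (Or.inl ⟨hallx p hp h0, h0⟩)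
    · rcases hU2 p hp h1 with rfl | rfl
      · exact Or.inr (Or.inr ⟨hT0x, hT0z⟩)
      · exact Or.inr (Or.inr ⟨hT1x, hT1z⟩)
  · push_neg at hallx
    obtain ⟨W2, hW2, hW2z, hW2x⟩ := hallx
    have hW2y : W2 y = 0 := by
      rcases patW W2 hW2 hW2z with hp | hp <;>
        rcases hp with ⟨h1, h2, h3⟩ | ⟨h1, h2, h3⟩ | ⟨h1, h2, h3⟩ <;> omega
    by_cases hally : ∀ W ∈ B, W z = 0 → W y = 0
    · left
      refine ⟨y, hv.yi, T1, hT1, hT1y, fun p hp hne => ?_⟩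
      rcases hz01 p hp with h0 | h1
      · exact hally p hp h0
      · rcases hU2 p hp h1 with rfl | rfl
        · exact hT0y
        · exact absurd rfl hne
    · push_neg at hally
      obtain ⟨W1, hW1, hW1z, hW1y⟩ := hally
      have hW1x : W1 x = 1 := by
        rcases patW W1 hW1 hW1z with hp | hp <;>
          rcases hp with ⟨h1, h2, h3⟩ | ⟨h1, h2, h3⟩ | ⟨h1, h2, h3⟩ <;> omega
      exfalso
      have hd := h.dep4 ![T0, T1, W1, W2] (by intro j; fin_cases j <;> assumption)
      rw [vdep4_iff] at hd
      obtain ⟨α, β, γ, δ, h0, hsum, hcombo⟩ := hd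
      have eqx := hcombo x hv.xi
      have eqy := hcombo y hv.yi
      have eqz := hcombo z hv.zi
      rw [hT0x, hT1x, hW1x] at eqx
      rw [hT0y, hT1y, hW2y] at eqy
      rw [hT0z, hT1z, hW1z, hW2z] at eqz
      push_cast at eqx eqy eqz
      have hδ : δ = -γ := by linarith
      have hγ : γ * (1 - (W2 x : ℚ)) = 0 := by
        rw [hδ] at eqx
        linear_combination eqx
      rcases mul_eq_zero.mp hγ with hγ0 | hW2x1
      · apply h0
        have hδ0 : δ = 0 := by rw [hγ0] at hδ; simpa using hδ
        rw [hγ0, hδ0] at eqy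
        have hβ0 : β = 0 := by linarith
        have hα0 : α = 0 := by linarith
        exact ⟨hα0, hβ0, hγ0, hδ0⟩
      · apply hW2x
        have : (W2 x : ℚ) = 1 := by linarith
        exact_mod_cast this

/-- C2 leaf: U = {(0,1,1),(1,0,1)} -/
lemma leafC2b_i (h : CoreHyp i B) (hv : Vis i x y z)
    (hz01 : ∀ p ∈ B, p z = 0 ∨ p z = 1)
    {A0 A1 : Fin 4 → ℤ} (hA0 : A0 ∈ B) (hA1 : A1 ∈ B)
    (hU2 : ∀ p ∈ B, p z = 1 → p = A0 ∨ p = A1)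
    (patW : ∀ W ∈ B, W z = 0 → pat x A0 A1 W ∨ pat y A0 A1 W)
    (hA0x : A0 x = 0) (hA0y : A0 y = 1) (hA0z : A0 z = 1)
    (hA1x : A1 x = 1) (hA1y : A1 y = 0) (hA1z : A1 z = 1) : CoreConcl i B := by
  have claim0 : ∀ W ∈ B, W z = 0 → W x = 0 ∨ W y = 0 := by
    intro W hW hWz
    rcases patW W hW hWz with hp | hp
    · left
      rcases hp with ⟨h1, h2, h3⟩ | ⟨h1, h2, h3⟩ | ⟨h1, h2, h3⟩ <;> omega
    · right
      rcases hp with ⟨h1, h2, h3⟩ | ⟨h1, h2, h3⟩ | ⟨h1, h2, h3⟩ <;> omega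
  by_cases hex : ∃ W ∈ B, W z = 0 ∧ W x ≠ 0
  · obtain ⟨W1, hW1, hW1z, hW1x⟩ := hex
    have hW1y : W1 y = 0 := (claim0 W1 hW1 hW1z).resolve_left hW1x
    have hs1 : 1 ≤ W1 x := by have := h.nn W1 hW1 x; omega
    have hind : ¬ vdep i ![A0, A1, W1] := by
      apply indep_of_det y z hv.yi hv.zi
      rw [hA0y, hA0z, hA1y, hA1z, hW1y, hW1z]
      norm_num
    have hplane := plane_eq h.dep4 hA0 hA1 hW1 hind x y z hv.xi hv.yi hv.zi
      1 1 ((W1 x : ℚ) - 1) (W1 x : ℚ)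
      (by rw [hA0x, hA0y, hA0z]; push_cast; ring)
      (by rw [hA1x, hA1y, hA1z]; push_cast; ring)
      (by rw [hW1y, hW1z]; push_cast; ring)
    by_cases hey : ∃ W ∈ B, W z = 0 ∧ W y ≠ 0
    · obtain ⟨W2, hW2, hW2z, hW2y⟩ := hey
      have hW2x : W2 x = 0 := (claim0 W2 hW2 hW2z).resolve_right hW2y
      have hW2val : W2 y = W1 x := by
        have := hplane W2 hW2
        rw [hW2x, hW2z] at this
        push_cast at this
        exact_mod_cast (by linarith : (W2 y : ℚ) = (W1 x : ℚ))
      have hall : ∀ p ∈ B, p = W2 ∨ p = W1 ∨ p = A0 ∨ p = A1 := by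
        intro p hp
        rcases hz01 p hp with h0 | h1
        · rcases claim0 p hp h0 with hpx | hpy
          · left
            apply h.inj p hp W2 hW2
            intro m hm
            have := hplane p hp
            rw [hpx, h0] at this
            push_cast at this
            have hpy : p y = W1 x := by exact_mod_cast (by linarith : (p y : ℚ) = (W1 x : ℚ))
            rcases hv.cases hm with rfl | rfl | rfl <;> omega
          · right; left
            apply h.inj p hp W1 hW1
            intro m hm
            have := hplane p hp
            rw [hpy, h0] at this
            push_cast at this
            have hpx : p x = W1 x := by exact_mod_cast (by linarith : (p x : ℚ) = (W1 x : ℚ))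
            rcases hv.cases hm with rfl | rfl | rfl <;> omega
        · rcases hU2 p hp h1 with rfl | rfl
          · right; right; left; rfl
          · right; right; right; rfl
      right; right
      have hv' : Vis i x z y := ⟨hv.xz, hv.xy, Ne.symm hv.yz, hv.xi, hv.zi, hv.yi⟩
      exact mkFlat hv' hW2 hW1 hA0 hA1 hs1 hW2x hW2z hW2val rfl hW1z hW1y
        hA0x hA0z hA0y hA1x hA1z hA1y hall
    · push_neg at hey
      left
      refine ⟨y, hv.yi, A0, hA0, hA0y, fun p hp hne => ?_⟩
      rcases hz01 p hp with h0 | h1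
      · exact hey p hp h0
      · rcases hU2 p hp h1 with rfl | rfl
        · exact absurd rfl hne
        · exact hA1y
  · push_neg at hex
    left
    refine ⟨x, hv.xi, A1, hA1, hA1x, fun p hp hne => ?_⟩
    rcases hz01 p hp with h0 | h1
    · exact hex p hp h0
    · rcases hU2 p hp h1 with rfl | rfl
      · exact hA0x
      · exact absurd rfl hne

/-- C2 leaf: U = {(0,0,1),(1,1,1)} -/
lemma leafC2b_ii (h : CoreHyp i B) (hv : Vis i x y z)
    (hz01 : ∀ p ∈ B, p z = 0 ∨ p z = 1)
    {A0 A1 : Fin 4 → ℤ} (hA0 : A0 ∈ B) (hA1 : A1 ∈ B)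
    (hU2 : ∀ p ∈ B, p z = 1 → p = A0 ∨ p = A1)
    (patW : ∀ W ∈ B, W z = 0 → pat x A0 A1 W ∨ pat y A0 A1 W)
    (hA0x : A0 x = 0) (hA0y : A0 y = 0) (hA0z : A0 z = 1)
    (hA1x : A1 x = 1) (hA1y : A1 y = 1) (hA1z : A1 z = 1) : CoreConcl i B := by
  have claim0 : ∀ W ∈ B, W z = 0 → W x = 0 ∨ W y = 0 := by
    intro W hW hWz
    rcases patW W hW hWz with hp | hp
    · left
      rcases hp with ⟨h1, h2, h3⟩ | ⟨h1, h2, h3⟩ | ⟨h1, h2, h3⟩ <;> omega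
    · right
      rcases hp with ⟨h1, h2, h3⟩ | ⟨h1, h2, h3⟩ | ⟨h1, h2, h3⟩ <;> omega
  by_cases hex : ∃ W ∈ B, W z = 0 ∧ W x ≠ 0
  · obtain ⟨W1, hW1, hW1z, hW1x⟩ := hex
    have hW1y : W1 y = 0 := (claim0 W1 hW1 hW1z).resolve_left hW1x
    by_cases hey : ∃ W ∈ B, W z = 0 ∧ W y ≠ 0
    · obtain ⟨W2, hW2, hW2z, hW2y⟩ := hey
      have hW2x : W2 x = 0 := (claim0 W2 hW2 hW2z).resolve_right hW2y
      exfalso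
      have hs1 : 1 ≤ W1 x := by have := h.nn W1 hW1 x; omega
      have ht1 : 1 ≤ W2 y := by have := h.nn W2 hW2 y; omega
      have hd := h.dep4 ![A0, A1, W1, W2] (by intro j; fin_cases j <;> assumption)
      rw [vdep4_iff] at hd
      obtain ⟨α, β, γ, δ, h0, hsum, hcombo⟩ := hd
      have eqx := hcombo x hv.xi
      have eqy := hcombo y hv.yi
      have eqz := hcombo z hv.zi
      rw [hA0x, hA1x, hW2x] at eqx
      rw [hA0y, hA1y, hW1y] at eqy
      rw [hA0z, hA1z, hW1z, hW2z] at eqz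
      push_cast at eqx eqy eqz
      have hδ : δ = -γ := by linarith
      have hγ : γ * ((W1 x : ℚ) + (W2 y : ℚ)) = 0 := by
        rw [hδ] at eqy
        linear_combination eqx - eqy
      have hst : (W1 x : ℚ) + (W2 y : ℚ) ≠ 0 := by
        have : (2 : ℚ) ≤ (W1 x : ℚ) + (W2 y : ℚ) := by
          push_cast
          exact_mod_cast (by omega : (2 : ℤ) ≤ W1 x + W2 y)
        linarith
      have hγ0 := (mul_eq_zero.mp hγ).resolve_right hst
      apply h0
      have hδ0 : δ = 0 := by rw [hγ0] at hδ; simpa using hδ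
      rw [hγ0, hδ0] at eqx
      have hβ0 : β = 0 := by linarith
      have hα0 : α = 0 := by linarith
      exact ⟨hα0, hβ0, hγ0, hδ0⟩
    · push_neg at hey
      left
      refine ⟨y, hv.yi, A1, hA1, hA1y, fun p hp hne => ?_⟩
      rcases hz01 p hp with h0 | h1
      · exact hey p hp h0
      · rcases hU2 p hp h1 with rfl | rfl
        · exact hA0y
        · exact absurd rfl hne
  · push_neg at hex
    left
    refine ⟨x, hv.xi, A1, hA1, hA1x, fun p hp hne => ?_⟩
    rcases hz01 p hp with h0 | h1
    · exact hex p hp h0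
    · rcases hU2 p hp h1 with rfl | rfl
      · exact hA0x
      · exact absurd rfl hne

end CaseC2


section CaseC2b

variable {i x y z : Fin 4} {B : Finset (Fin 4 → ℤ)}

lemma caseC2X1 (h : CoreHyp i B) (hv : Vis i x y z)
    (hz01 : ∀ p ∈ B, p z = 0 ∨ p z = 1)
    {T0 T1 : Fin 4 → ℤ} (hT0 : T0 ∈ B) (hT1 : T1 ∈ B)
    (hU2 : ∀ p ∈ B, p z = 1 → p = T0 ∨ p = T1)
    (patW : ∀ W ∈ B, W z = 0 → pat x T0 T1 W ∨ pat y T0 T1 W)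
    (hT0x : T0 x = 0) (hT1x : T1 x = 1) (hT0z : T0 z = 1) (hT1z : T1 z = 1) :
    CoreConcl i B := by
  by_cases c1 : T0 y = 1 ∧ T1 y = 0
  · exact leafC2b_i h hv hz01 hT0 hT1 hU2 patW hT0x c1.1 hT0z hT1x c1.2 hT1z
  by_cases c2 : T0 y = 0 ∧ T1 y = 1
  · exact leafC2b_ii h hv hz01 hT0 hT1 hU2 patW hT0x c2.1 hT0z hT1x c2.2 hT1z
  by_cases c3 : T0 y = 0 ∧ T1 y = 0
  · exact leafC2a h hv.swapxy hz01 hT0 hT1 hU2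
      (fun W hW h0 => (patW W hW h0).symm) c3.1 hT0x hT0z c3.2 hT1x hT1z
  · have hWx : ∀ W ∈ B, W z = 0 → W x = 0 := by
      intro W hW hWz
      rcases patW W hW hWz with hp | hp <;>
        rcases hp with ⟨h1, h2, h3⟩ | ⟨h1, h2, h3⟩ | ⟨h1, h2, h3⟩ <;> omega
    left
    refine ⟨x, hv.xi, T1, hT1, hT1x, fun p hp hne => ?_⟩
    rcases hz01 p hp with h0 | h1
    · exact hWx p hp h0
    · rcases hU2 p hp h1 with rfl | rfl
      · exact hT0x
      · exact absurd rfl hne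

lemma caseC2core (h : CoreHyp i B) (hv : Vis i x y z)
    (hz01 : ∀ p ∈ B, p z = 0 ∨ p z = 1)
    {u0 u1 : Fin 4 → ℤ} (hu0 : u0 ∈ B) (hu1 : u1 ∈ B)
    (hU2 : ∀ p ∈ B, p z = 1 → p = u0 ∨ p = u1)
    (patW : ∀ W ∈ B, W z = 0 → pat x u0 u1 W ∨ pat y u0 u1 W)
    (hz0 : u0 z = 1) (hz1 : u1 z = 1) (hne : u0 ≠ u1)
    (hsh : (u0 x = 0 ∧ u1 x = 0) ∨ (u0 x = 1 ∧ u1 x = 0) ∨ (u0 x = 0 ∧ u1 x = 1)) :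
    CoreConcl i B := by
  have hU2' : ∀ p ∈ B, p z = 1 → p = u1 ∨ p = u0 := fun p hp h1 => (hU2 p hp h1).symm
  have patW' : ∀ W ∈ B, W z = 0 → pat x u1 u0 W ∨ pat y u1 u0 W :=
    fun W hW h0 => (patW W hW h0).imp pat_comm pat_comm
  rcases hsh with ⟨e0, e1⟩ | ⟨e0, e1⟩ | ⟨e0, e1⟩
  · have hby : u0 y ≠ u1 y := by
      rcases h.ne3 hv hu0 hu1 hne with h' | h' | h' <;> omega
    by_cases d1 : u0 y = 0 ∧ u1 y = 1
    · exact leafC2a h hv hz01 hu0 hu1 hU2 patW e0 d1.1 hz0 e1 d1.2 hz1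
    by_cases d2 : u0 y = 1 ∧ u1 y = 0
    · exact leafC2a h hv hz01 hu1 hu0 hU2' patW' e1 d2.2 hz1 e0 d2.1 hz0
    · have hWx : ∀ W ∈ B, W z = 0 → W x = 1 := by
        intro W hW hWz
        rcases patW W hW hWz with hp | hp <;>
          rcases hp with ⟨h1, h2, h3⟩ | ⟨h1, h2, h3⟩ | ⟨h1, h2, h3⟩ <;> omega
      right; left
      refine ⟨x, z, hv.xi, hv.zi, hv.xz, fun p hp => ?_⟩
      rcases hz01 p hp with h0 | h1
      · exact Or.inr (Or.inl ⟨hWx p hp h0, h0⟩)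
      · rcases hU2 p hp h1 with rfl | rfl
        · exact Or.inr (Or.inr ⟨e0, hz0⟩)
        · exact Or.inr (Or.inr ⟨e1, hz1⟩)
  · exact caseC2X1 h hv hz01 hu1 hu0 hU2' patW' e1 e0 hz1 hz0
  · exact caseC2X1 h hv hz01 hu0 hu1 hU2 patW e0 e1 hz0 hz1

/-- pattern for pairs of height-one points with a base point -/
lemma pairPat_of (h : CoreHyp i B) (hv : Vis i x y z) :
    ∀ u ∈ B, ∀ v ∈ B, ∀ W ∈ B, u z = 1 → v z = 1 → W z = 0 → u ≠ v →
      pat x u v W ∨ pat y u v W := by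
  intro u hu v hvv W hW huz hvz hWz huv
  have hindW : ¬ vdep i ![u, v, W] := by
    rcases h.ne3 hv hu hvv huv with ht | ht | ht
    · apply indep_of_det x z hv.xi hv.zi
      have : (v x - u x) * (W z - u z) - (v z - u z) * (W x - u x)
          = u x - v x := by rw [huz, hvz, hWz]; ring
      omega
    · apply indep_of_det y z hv.yi hv.zi
      have : (v y - u y) * (W z - u z) - (v z - u z) * (W y - u y)
          = u y - v y := by rw [huz, hvz, hWz]; ring
      omega
    · omega
  obtain ⟨k, hk, hp⟩ := h.pat3 u hu v hvv W hW hindW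
  rcases hv.cases hk with rfl | rfl | rfl
  · exact Or.inl hp
  · exact Or.inr hp
  · exfalso
    rcases hp with ⟨h1, h2, h3⟩ | ⟨h1, h2, h3⟩ | ⟨h1, h2, h3⟩ <;> omega

/-- three collinear points whose x-coordinates are pairwise distinct,
two of the pairs using a y-pattern with P2 -/
lemma C2threeY (h : CoreHyp i B) (hv : Vis i x y z)
    {Ra Rb Rc P2 : Fin 4 → ℤ} (hRa : Ra ∈ B) (hRb : Rb ∈ B) (hRc : Rc ∈ B)
    (hP2 : P2 ∈ B)
    (hza : Ra z = 1) (hzb : Rb z = 1) (hzc : Rc z = 1)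
    (hab : Ra x ≠ Rb x) (hac : Ra x ≠ Rc x) (hbc : Rb x ≠ Rc x)
    (hP2z : P2 z = 0)
    (hz01 : ∀ p ∈ B, p z = 0 ∨ p z = 1)
    (pYac : pat y Ra Rc P2) (pYbc : pat y Rb Rc P2) : CoreConcl i B := by
  have pairPat := pairPat_of h hv
  have hdep : vdep i ![Ra, Rb, Rc] :=
    collinear_level h.dep4 hRa hRb hRc hP2 z hv.zi (by omega) (by omega) (by omega)
  have hdet := det0_of_vdep hdep x y hv.xi hv.yi
  rcases pYac with ⟨e1, e2, e3⟩ | ⟨e1, e2, e3⟩ | ⟨e1, e2, e3⟩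
  · -- Ra y = 1, Rc y = 0, P2 y = 0
    rcases pYbc with ⟨f1, f2, f3⟩ | ⟨f1, f2, f3⟩ | ⟨f1, f2, f3⟩
    · -- Rb y = 1 : Ra Rb level in y
      exfalso
      have : (Rb x - Ra x) * (Rc y - Ra y) - (Rb y - Ra y) * (Rc x - Ra x)
          = (Rb x - Ra x) * (-1) := by rw [e1, e2, f1]; ring
      omega
    · omega
    · omega
  · -- Rc y = 1, Ra y = 0, P2 y = 0
    have hb0 : Rb y = 0 := by
      rcases pYbc with ⟨f1, f2, f3⟩ | ⟨f1, f2, f3⟩ | ⟨f1, f2, f3⟩ <;> omega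
    exfalso
    have : (Rb x - Ra x) * (Rc y - Ra y) - (Rb y - Ra y) * (Rc x - Ra x)
        = (Rb x - Ra x) * 1 := by rw [e1, e2, hb0]; ring
    omega
  · -- P2 y = 1, Ra y = 0, Rc y = 0
    have hb0 : Rb y = 0 := by
      rcases pYbc with ⟨f1, f2, f3⟩ | ⟨f1, f2, f3⟩ | ⟨f1, f2, f3⟩ <;> omega
    -- every base point has y-coordinate 1
    have hWy : ∀ W ∈ B, W z = 0 → W y = 1 := by
      intro W hW hWz
      have p1 := pairPat Ra hRa Rb hRb W hW hza hzb hWz (fun hc => hab (by rw [hc]))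
      have p2 := pairPat Ra hRa Rc hRc W hW hza hzc hWz (fun hc => hac (by rw [hc]))
      have p3 := pairPat Rb hRb Rc hRc W hW hzb hzc hWz (fun hc => hbc (by rw [hc]))
      rcases p1 with hp | hp
      rcases p2 with hq | hq
      rcases p3 with hr | hr
      · exfalso
        rcases hp with ⟨g1, g2, g3⟩ | ⟨g1, g2, g3⟩ | ⟨g1, g2, g3⟩ <;>
          rcases hq with ⟨k1, k2, k3⟩ | ⟨k1, k2, k3⟩ | ⟨k1, k2, k3⟩ <;> omega
      · rcases hr with ⟨g1, g2, g3⟩ | ⟨g1, g2, g3⟩ | ⟨g1, g2, g3⟩ <;> omega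
      · rcases hq with ⟨g1, g2, g3⟩ | ⟨g1, g2, g3⟩ | ⟨g1, g2, g3⟩ <;> omega
      · rcases hp with ⟨g1, g2, g3⟩ | ⟨g1, g2, g3⟩ | ⟨g1, g2, g3⟩ <;> omega
    -- every height-one point has y-coordinate 0
    have hUy : ∀ p ∈ B, p z = 1 → p y = 0 := by
      intro p hp hpz
      by_contra hpy
      have hP2y1 : P2 y = 1 := e1
      have q1 := pairPat p hp Ra hRa P2 hP2 hpz hza hP2z (fun hc => hpy (by rw [hc, e2]))
      have q2 := pairPat p hp Rb hRb P2 hP2 hpz hzb hP2z (fun hc => hpy (by rw [hc, hb0]))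
      have q3 := pairPat p hp Rc hRc P2 hP2 hpz hzc hP2z (fun hc => hpy (by rw [hc, e3]))
      have q1' : pat x p Ra P2 := by
        rcases q1 with hq | hq
        · exact hq
        · exfalso; rcases hq with ⟨g1, g2, g3⟩ | ⟨g1, g2, g3⟩ | ⟨g1, g2, g3⟩ <;> omega
      have q2' : pat x p Rb P2 := by
        rcases q2 with hq | hq
        · exact hq
        · exfalso; rcases hq with ⟨g1, g2, g3⟩ | ⟨g1, g2, g3⟩ | ⟨g1, g2, g3⟩ <;> omega
      have q3' : pat x p Rc P2 := by
        rcases q3 with hq | hq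
        · exact hq
        · exfalso; rcases hq with ⟨g1, g2, g3⟩ | ⟨g1, g2, g3⟩ | ⟨g1, g2, g3⟩ <;> omega
      rcases q1' with ⟨g1, g2, g3⟩ | ⟨g1, g2, g3⟩ | ⟨g1, g2, g3⟩ <;>
        rcases q2' with ⟨k1, k2, k3⟩ | ⟨k1, k2, k3⟩ | ⟨k1, k2, k3⟩ <;>
        rcases q3' with ⟨l1, l2, l3⟩ | ⟨l1, l2, l3⟩ | ⟨l1, l2, l3⟩ <;> omega
    right; left
    refine ⟨y, z, hv.yi, hv.zi, hv.yz, fun p hp => ?_⟩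
    rcases hz01 p hp with h0 | h1
    · exact Or.inr (Or.inl ⟨hWy p hp h0, h0⟩)
    · exact Or.inr (Or.inr ⟨hUy p hp h1, h1⟩)

/-- three distinct points at height one, first two differing in x -/
lemma C2threeX (h : CoreHyp i B) (hv : Vis i x y z)
    {R1 R2 R3 P2 : Fin 4 → ℤ} (hR1 : R1 ∈ B) (hR2 : R2 ∈ B) (hR3 : R3 ∈ B)
    (hP2 : P2 ∈ B)
    (hz1 : R1 z = 1) (hz2 : R2 z = 1) (hz3 : R3 z = 1)
    (h12 : R1 ≠ R2) (h13 : R1 ≠ R3) (h23 : R2 ≠ R3)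
    (hP2z : P2 z = 0)
    (hz01 : ∀ p ∈ B, p z = 0 ∨ p z = 1)
    (hx12 : R1 x ≠ R2 x) : CoreConcl i B := by
  have pairPat := pairPat_of h hv
  have hdep : vdep i ![R1, R2, R3] :=
    collinear_level h.dep4 hR1 hR2 hR3 hP2 z hv.zi (by omega) (by omega) (by omega)
  -- the three x-coordinates are pairwise distinct
  have hwts := (vdep3_iff i R1 R2 R3).mp hdep
  obtain ⟨wa, wb, wc, hw0, hwsum, hwc⟩ := hwts
  have hxd : R1 x ≠ R3 x ∧ R2 x ≠ R3 x := by
    have ea := hwc x hv.xi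
    constructor
    · intro hx13
      -- then wb = 0
      have hwb : wb * ((R2 x : ℚ) - R1 x) = 0 := by
        rw [← hx13] at ea
        linear_combination ea - (R1 x : ℚ) * hwsum
      have hwb0 : wb = 0 := by
        rcases mul_eq_zero.mp hwb with h' | h'
        · exact h'
        · exfalso; apply hx12; exact_mod_cast (by linarith : (R1 x : ℚ) = R2 x)
      -- then wa (R1 - R3) = 0 visibly
      have key : ∀ m, m ≠ i → wa * ((R1 m : ℚ) - R3 m) = 0 := by
        intro m hm
        have := hwc m hm
        rw [hwb0] at this hwsum
        have hca : wc = -wa := by linarith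
        rw [hca] at this
        linear_combination this
      have hwa0 : wa = 0 := by
        by_contra hwa
        apply h13
        apply h.inj R1 hR1 R3 hR3
        intro m hm
        have := key m hm
        rcases mul_eq_zero.mp this with h' | h'
        · exact absurd h' hwa
        · exact_mod_cast (by linarith : (R1 m : ℚ) = R3 m)
      apply hw0
      refine ⟨hwa0, hwb0, ?_⟩
      rw [hwa0, hwb0] at hwsum
      linarith
    · intro hx23
      have hwa : wa * ((R1 x : ℚ) - R2 x) = 0 := by
        rw [← hx23] at ea
        linear_combination ea - (R2 x : ℚ) * hwsum
      have hwa0 : wa = 0 := by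
        rcases mul_eq_zero.mp hwa with h' | h'
        · exact h'
        · exfalso; apply hx12; exact_mod_cast (by linarith : (R1 x : ℚ) = R2 x)
      have key : ∀ m, m ≠ i → wb * ((R2 m : ℚ) - R3 m) = 0 := by
        intro m hm
        have := hwc m hm
        rw [hwa0] at this hwsum
        have hca : wc = -wb := by linarith
        rw [hca] at this
        linear_combination this
      have hwb0 : wb = 0 := by
        by_contra hwb
        apply h23
        apply h.inj R2 hR2 R3 hR3
        intro m hm
        have := key m hm
        rcases mul_eq_zero.mp this with h' | h'
        · exact absurd h' hwb
        · exact_mod_cast (by linarith : (R2 m : ℚ) = R3 m)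
      apply hw0
      refine ⟨hwa0, hwb0, ?_⟩
      rw [hwa0, hwb0] at hwsum
      linarith
  obtain ⟨hx13, hx23⟩ := hxd
  -- pair conditions with P2
  have p12 := pairPat R1 hR1 R2 hR2 P2 hP2 hz1 hz2 hP2z h12
  have p13 := pairPat R1 hR1 R3 hR3 P2 hP2 hz1 hz3 hP2z h13
  have p23 := pairPat R2 hR2 R3 hR3 P2 hP2 hz2 hz3 hP2z h23
  rcases p12 with hp12 | hp12
  · rcases p13 with hp13 | hp13
    · exfalso
      rcases hp12 with ⟨g1, g2, g3⟩ | ⟨g1, g2, g3⟩ | ⟨g1, g2, g3⟩ <;>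
        rcases hp13 with ⟨k1, k2, k3⟩ | ⟨k1, k2, k3⟩ | ⟨k1, k2, k3⟩ <;> omega
    · rcases p23 with hp23 | hp23
      · exfalso
        rcases hp12 with ⟨g1, g2, g3⟩ | ⟨g1, g2, g3⟩ | ⟨g1, g2, g3⟩ <;>
          rcases hp23 with ⟨k1, k2, k3⟩ | ⟨k1, k2, k3⟩ | ⟨k1, k2, k3⟩ <;> omega
      · -- pairs (1,3) and (2,3) are y-patterns, shared point R3
        exact C2threeY h hv hR1 hR2 hR3 hP2 hz1 hz2 hz3 hx12 hx13 hx23 hP2z hz01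
          hp13 hp23
  · rcases p13 with hp13 | hp13
    · rcases p23 with hp23 | hp23
      · exfalso
        rcases hp13 with ⟨g1, g2, g3⟩ | ⟨g1, g2, g3⟩ | ⟨g1, g2, g3⟩ <;>
          rcases hp23 with ⟨k1, k2, k3⟩ | ⟨k1, k2, k3⟩ | ⟨k1, k2, k3⟩ <;> omega
      · -- pairs (1,2) and (2,3) : shared point R2
        exact C2threeY h hv hR1 hR3 hR2 hP2 hz1 hz3 hz2 hx13 hx12 (Ne.symm hx23)
          hP2z hz01 hp12 (pat_comm hp23)
    · -- pairs (1,2) and (1,3) : shared point R1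
      exact C2threeY h hv hR2 hR3 hR1 hP2 hz2 hz3 hz1 hx23 (Ne.symm hx12)
        (Ne.symm hx13) hP2z hz01 (pat_comm hp12) (pat_comm hp13)

/-- three distinct points at height one -/
lemma C2three (h : CoreHyp i B) (hv : Vis i x y z)
    {R1 R2 R3 P2 P3 : Fin 4 → ℤ} (hR1 : R1 ∈ B) (hR2 : R2 ∈ B) (hR3 : R3 ∈ B)
    (hP2 : P2 ∈ B) (hP3 : P3 ∈ B)
    (hz1 : R1 z = 1) (hz2 : R2 z = 1) (hz3 : R3 z = 1)
    (h12 : R1 ≠ R2) (h13 : R1 ≠ R3) (h23 : R2 ≠ R3)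
    (hP2z : P2 z = 0) (hP3z : P3 z = 0) (hP23 : P2 ≠ P3)
    (hz01 : ∀ p ∈ B, p z = 0 ∨ p z = 1) : CoreConcl i B := by
  have pairPat := pairPat_of h hv
  by_cases e12 : R1 x = R2 x
  · by_cases e13 : R1 x = R3 x
    · have hyd12 : R1 y ≠ R2 y := by
        rcases h.ne3 hv hR1 hR2 h12 with h' | h' | h' <;> omega
      have hyd13 : R1 y ≠ R3 y := by
        rcases h.ne3 hv hR1 hR3 h13 with h' | h' | h' <;> omega
      have hyd23 : R2 y ≠ R3 y := by
        rcases h.ne3 hv hR2 hR3 h23 with h' | h' | h' <;> omega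
      by_cases hα : R1 x = 0
      · have hWx1 : ∀ W ∈ B, W z = 0 → W x = 1 := by
          intro W hW hWz
          by_contra hWx
          have q1 : pat y R1 R2 W :=
            (pairPat R1 hR1 R2 hR2 W hW hz1 hz2 hWz h12).resolve_left
              (by rintro (⟨g1, g2, g3⟩ | ⟨g1, g2, g3⟩ | ⟨g1, g2, g3⟩) <;> omega)
          have q2 : pat y R1 R3 W :=
            (pairPat R1 hR1 R3 hR3 W hW hz1 hz3 hWz h13).resolve_left
              (by rintro (⟨g1, g2, g3⟩ | ⟨g1, g2, g3⟩ | ⟨g1, g2, g3⟩) <;> omega)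
          have q3 : pat y R2 R3 W :=
            (pairPat R2 hR2 R3 hR3 W hW hz2 hz3 hWz h23).resolve_left
              (by rintro (⟨g1, g2, g3⟩ | ⟨g1, g2, g3⟩ | ⟨g1, g2, g3⟩) <;> omega)
          rcases q1 with ⟨g1, g2, g3⟩ | ⟨g1, g2, g3⟩ | ⟨g1, g2, g3⟩ <;>
            rcases q2 with ⟨k1, k2, k3⟩ | ⟨k1, k2, k3⟩ | ⟨k1, k2, k3⟩ <;>
            rcases q3 with ⟨l1, l2, l3⟩ | ⟨l1, l2, l3⟩ | ⟨l1, l2, l3⟩ <;> omega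
        have hUx0 : ∀ p ∈ B, p z = 1 → p x = 0 := by
          intro p hp hpz
          by_contra hpx
          have hP2x : P2 x = 1 := hWx1 P2 hP2 hP2z
          have hpR1 : p ≠ R1 := fun hc => hpx (by rw [hc]; omega)
          have hpR2 : p ≠ R2 := fun hc => hpx (by rw [hc]; omega)
          have hpR3 : p ≠ R3 := fun hc => hpx (by rw [hc]; omega)
          have q1 : pat y p R1 P2 :=
            (pairPat p hp R1 hR1 P2 hP2 hpz hz1 hP2z hpR1).resolve_left
              (by rintro (⟨g1, g2, g3⟩ | ⟨g1, g2, g3⟩ | ⟨g1, g2, g3⟩) <;> omega)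
          have q2 : pat y p R2 P2 :=
            (pairPat p hp R2 hR2 P2 hP2 hpz hz2 hP2z hpR2).resolve_left
              (by rintro (⟨g1, g2, g3⟩ | ⟨g1, g2, g3⟩ | ⟨g1, g2, g3⟩) <;> omega)
          have q3 : pat y p R3 P2 :=
            (pairPat p hp R3 hR3 P2 hP2 hpz hz3 hP2z hpR3).resolve_left
              (by rintro (⟨g1, g2, g3⟩ | ⟨g1, g2, g3⟩ | ⟨g1, g2, g3⟩) <;> omega)
          rcases q1 with ⟨g1, g2, g3⟩ | ⟨g1, g2, g3⟩ | ⟨g1, g2, g3⟩ <;>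
            rcases q2 with ⟨k1, k2, k3⟩ | ⟨k1, k2, k3⟩ | ⟨k1, k2, k3⟩ <;>
            rcases q3 with ⟨l1, l2, l3⟩ | ⟨l1, l2, l3⟩ | ⟨l1, l2, l3⟩ <;> omega
        right; left
        refine ⟨x, z, hv.xi, hv.zi, hv.xz, fun p hp => ?_⟩
        rcases hz01 p hp with h0 | h1
        · exact Or.inr (Or.inl ⟨hWx1 p hp h0, h0⟩)
        · exact Or.inr (Or.inr ⟨hUx0 p hp h1, h1⟩)
      · exfalso
        have q1 : pat y R1 R2 P2 :=
          (pairPat R1 hR1 R2 hR2 P2 hP2 hz1 hz2 hP2z h12).resolve_left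
            (by rintro (⟨g1, g2, g3⟩ | ⟨g1, g2, g3⟩ | ⟨g1, g2, g3⟩) <;> omega)
        have q2 : pat y R1 R3 P2 :=
          (pairPat R1 hR1 R3 hR3 P2 hP2 hz1 hz3 hP2z h13).resolve_left
            (by rintro (⟨g1, g2, g3⟩ | ⟨g1, g2, g3⟩ | ⟨g1, g2, g3⟩) <;> omega)
        have q3 : pat y R2 R3 P2 :=
          (pairPat R2 hR2 R3 hR3 P2 hP2 hz2 hz3 hP2z h23).resolve_left
            (by rintro (⟨g1, g2, g3⟩ | ⟨g1, g2, g3⟩ | ⟨g1, g2, g3⟩) <;> omega)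
        rcases q1 with ⟨g1, g2, g3⟩ | ⟨g1, g2, g3⟩ | ⟨g1, g2, g3⟩ <;>
          rcases q2 with ⟨k1, k2, k3⟩ | ⟨k1, k2, k3⟩ | ⟨k1, k2, k3⟩ <;>
          rcases q3 with ⟨l1, l2, l3⟩ | ⟨l1, l2, l3⟩ | ⟨l1, l2, l3⟩ <;> omega
    · exact C2threeX h hv hR1 hR3 hR2 hP2 hz1 hz3 hz2 h13 h12 (Ne.symm h23)
        hP2z hz01 e13
  · exact C2threeX h hv hR1 hR2 hR3 hP2 hz1 hz2 hz3 h12 h13 h23 hP2z hz01 e12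

lemma caseC2 (h : CoreHyp i B) (hv : Vis i x y z)
    {P1 P2 P3 R : Fin 4 → ℤ} (hP1 : P1 ∈ B) (hP2 : P2 ∈ B) (hP3 : P3 ∈ B) (hR : R ∈ B)
    (hind : ¬ vdep i ![P1, P2, P3])
    (hP1z : P1 z = 1) (hP2z : P2 z = 0) (hP3z : P3 z = 0)
    (hRP1 : R ≠ P1) (hRz : R z = 1)
    (hz01 : ∀ p ∈ B, p z = 0 ∨ p z = 1) : CoreConcl i B := by
  have hP23 : P2 ≠ P3 := by
    rintro rfl
    exact hind (vdep3_of_visEq fun m hm => rfl)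
  by_cases h3U : ∃ p ∈ B, p z = 1 ∧ p ≠ P1 ∧ p ≠ R
  · obtain ⟨p, hp, hpz, hpP1, hpR⟩ := h3U
    exact C2three h hv hP1 hR hp hP2 hP3 hP1z hRz hpz (Ne.symm hRP1) (Ne.symm hpP1)
      (Ne.symm hpR) hP2z hP3z hP23 hz01
  push_neg at h3U
  have hU2 : ∀ p ∈ B, p z = 1 → p = P1 ∨ p = R := by
    intro p hp hpz
    by_contra hc
    push_neg at hc
    exact hc.2 (h3U p hp hpz hc.1)
  have patW : ∀ W ∈ B, W z = 0 → pat x P1 R W ∨ pat y P1 R W := by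
    intro W hW hWz
    have hindW : ¬ vdep i ![P1, R, W] := by
      rcases h.ne3 hv hP1 hR (Ne.symm hRP1) with ht | ht | ht
      · apply indep_of_det x z hv.xi hv.zi
        have : (R x - P1 x) * (W z - P1 z) - (R z - P1 z) * (W x - P1 x)
            = P1 x - R x := by rw [hP1z, hRz, hWz]; ring
        omega
      · apply indep_of_det y z hv.yi hv.zi
        have : (R y - P1 y) * (W z - P1 z) - (R z - P1 z) * (W y - P1 y)
            = P1 y - R y := by rw [hP1z, hRz, hWz]; ring
        omega
      · omega
    obtain ⟨k, hk, hp⟩ := h.pat3 P1 hP1 R hR W hW hindW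
    rcases hv.cases hk with rfl | rfl | rfl
    · exact Or.inl hp
    · exact Or.inr hp
    · exfalso
      rcases hp with ⟨h1, h2, h3⟩ | ⟨h1, h2, h3⟩ | ⟨h1, h2, h3⟩ <;> omega
  rcases patW P2 hP2 hP2z with hp | hp
  · apply caseC2core h hv hz01 hP1 hR hU2 patW hP1z hRz (Ne.symm hRP1)
    rcases hp with ⟨h1, h2, h3⟩ | ⟨h1, h2, h3⟩ | ⟨h1, h2, h3⟩
    · exact Or.inr (Or.inl ⟨h1, h2⟩)
    · exact Or.inr (Or.inr ⟨h2, h1⟩)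
    · exact Or.inl ⟨h2, h3⟩
  · apply caseC2core h hv.swapxy hz01 hP1 hR hU2
      (fun W hW h0 => (patW W hW h0).symm) hP1z hRz (Ne.symm hRP1)
    rcases hp with ⟨h1, h2, h3⟩ | ⟨h1, h2, h3⟩ | ⟨h1, h2, h3⟩
    · exact Or.inr (Or.inl ⟨h1, h2⟩)
    · exact Or.inr (Or.inr ⟨h2, h1⟩)
    · exact Or.inl ⟨h2, h3⟩

end CaseC2b


section CaseC3

variable {i x y z : Fin 4} {B : Finset (Fin 4 → ℤ)}

/-- C3, subcase: all base points have x-coordinate 0 -/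
lemma C3O1 (h : CoreHyp i B) (hv : Vis i x y z)
    (he : ∃ A, A ∈ B ∧ ∃ A', A' ∈ B ∧ ∃ A'', A'' ∈ B ∧ ¬ vdep i ![A, A', A''])
    {P1 P2 P3 R0 : Fin 4 → ℤ}
    (hP1 : P1 ∈ B) (hP2 : P2 ∈ B) (hP3 : P3 ∈ B) (hR0 : R0 ∈ B)
    (hind : ¬ vdep i ![P1, P2, P3])
    (hP1z : P1 z = 1) (hP2z : P2 z = 0) (hP3z : P3 z = 0)
    (hR0z : 2 ≤ R0 z)
    (hWx : ∀ W ∈ B, W z = 0 → W x = 0) : CoreConcl i B := by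
  have hP2x := hWx P2 hP2 hP2z
  have hP3x := hWx P3 hP3 hP3z
  have hP23 : P2 ≠ P3 := by
    rintro rfl
    exact hind (vdep3_of_visEq fun m hm => rfl)
  have hP23y : P2 y ≠ P3 y := by
    rcases h.ne3 hv hP2 hP3 hP23 with h' | h' | h' <;> omega
  have hplane := plane_eq h.dep4 hP1 hP2 hP3 hind x y z hv.xi hv.yi hv.zi
    1 0 (-(P1 x : ℚ)) 0
    (by rw [hP1z]; push_cast; ring)
    (by rw [hP2x, hP2z]; push_cast; ring)
    (by rw [hP3x, hP3z]; push_cast; ring)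
  have hplaneZ : ∀ q ∈ B, q x = P1 x * q z := by
    intro q hq
    have := hplane q hq
    have : (q x : ℚ) = (P1 x : ℚ) * (q z : ℚ) := by linarith
    exact_mod_cast this
  by_cases hp0 : P1 x = 0
  · apply const_coord h he x hv.xi
    intro p hp q hq
    have h1 := hplaneZ p hp
    have h2 := hplaneZ q hq
    rw [hp0] at h1 h2
    omega
  · have hp1 : 1 ≤ P1 x := by have := h.nn P1 hP1 x; omega
    have hR0x : R0 x = P1 x * R0 z := hplaneZ R0 hR0
    have hR0x2 : 2 ≤ R0 x := by
      have : 1 * R0 z ≤ P1 x * R0 z :=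
        mul_le_mul_of_nonneg_right hp1 (by omega)
      omega
    have hindR : ¬ vdep i ![R0, P2, P3] := by
      apply indep_of_det y z hv.yi hv.zi
      have : (P2 y - R0 y) * (P3 z - R0 z) - (P2 z - R0 z) * (P3 y - R0 y)
          = R0 z * (P3 y - P2 y) := by rw [hP2z, hP3z]; ring
      rw [this]
      exact mul_ne_zero (by omega) (by omega)
    obtain ⟨k, hk, hpt⟩ := h.pat3 R0 hR0 P2 hP2 P3 hP3 hindR
    have hpt' : (P2 y = 1 ∧ R0 y = 0 ∧ P3 y = 0) ∨ (P3 y = 1 ∧ R0 y = 0 ∧ P2 y = 0) := by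
      rcases hv.cases hk with rfl | rfl | rfl
      · exfalso
        rcases hpt with ⟨h1, h2, h3⟩ | ⟨h1, h2, h3⟩ | ⟨h1, h2, h3⟩ <;> omega
      · rcases hpt with ⟨h1, h2, h3⟩ | ⟨h1, h2, h3⟩ | ⟨h1, h2, h3⟩
        · exact absurd h2 (by omega)
        · exact Or.inl ⟨h1, h2, h3⟩
        · exact Or.inr ⟨h1, h2, h3⟩
      · exfalso
        rcases hpt with ⟨h1, h2, h3⟩ | ⟨h1, h2, h3⟩ | ⟨h1, h2, h3⟩ <;> omega
    clear hpt
    -- name the two base points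
    obtain ⟨W2, W1, hW2, hW1, hW2y, hW1y, hW2z, hW1z, hR0y⟩ :
        ∃ W2 W1, W2 ∈ B ∧ W1 ∈ B ∧ W2 y = 1 ∧ W1 y = 0 ∧ W2 z = 0 ∧ W1 z = 0 ∧
          R0 y = 0 := by
      rcases hpt' with ⟨h1, h2, h3⟩ | ⟨h1, h2, h3⟩
      · exact ⟨P2, P3, hP2, hP3, h1, h3, hP2z, hP3z, h2⟩
      · exact ⟨P3, P2, hP3, hP2, h1, h3, hP3z, hP2z, h2⟩
    have hW1x := hWx W1 hW1 hW1z
    have hW2x := hWx W2 hW2 hW2z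
    have claim : ∀ q ∈ B, q y ≠ 0 → q = W2 := by
      intro q hq hqy
      have hqy1 : 1 ≤ q y := by have := h.nn q hq y; omega
      by_cases hqz : q z = 0
      · have hqx := hWx q hq hqz
        have hindq : ¬ vdep i ![R0, q, W1] := by
          apply indep_of_det y z hv.yi hv.zi
          have : (q y - R0 y) * (W1 z - R0 z) - (q z - R0 z) * (W1 y - R0 y)
              = -(q y * R0 z) := by rw [hR0y, hW1y, hW1z, hqz]; ring
          rw [this]
          exact neg_ne_zero.mpr (mul_ne_zero (by omega) (by omega))
        obtain ⟨k', hk', hpt⟩ := h.pat3 R0 hR0 q hq W1 hW1 hindq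
        have hqy' : q y = 1 := by
          rcases hv.cases hk' with rfl | rfl | rfl <;>
            rcases hpt with ⟨h1, h2, h3⟩ | ⟨h1, h2, h3⟩ | ⟨h1, h2, h3⟩ <;> omega
        apply h.inj q hq W2 hW2
        intro m hm
        rcases hv.cases hm with rfl | rfl | rfl <;> omega
      · exfalso
        have hqz1 : 1 ≤ q z := by have := h.nn q hq z; omega
        have hqx : q x = P1 x * q z := hplaneZ q hq
        have hqx1 : 1 ≤ q x := by
          have : 1 * q z ≤ P1 x * q z := mul_le_mul_of_nonneg_right hp1 (by omega)
          omega
        have hindq : ¬ vdep i ![q, W2, R0] := by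
          apply indep_of_det y z hv.yi hv.zi
          have heq : (W2 y - q y) * (R0 z - q z) - (W2 z - q z) * (R0 y - q y)
              = (1 - q y) * R0 z - q z := by rw [hW2y, hW2z, hR0y]; ring
          rw [heq]
          have hnp : (1 - q y) * R0 z ≤ 0 :=
            mul_nonpos_of_nonpos_of_nonneg (by omega) (by omega)
          omega
        obtain ⟨k', hk', hpt⟩ := h.pat3 q hq W2 hW2 R0 hR0 hindq
        rcases hv.cases hk' with rfl | rfl | rfl <;>
          rcases hpt with ⟨h1, h2, h3⟩ | ⟨h1, h2, h3⟩ | ⟨h1, h2, h3⟩ <;> omega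
    left
    exact ⟨y, hv.yi, W2, hW2, hW2y, fun p hp hne => by
      by_contra h0; exact hne (claim p hp h0)⟩

end CaseC3


section CaseC3b

variable {i x y z : Fin 4} {B : Finset (Fin 4 → ℤ)}

/-- C3, main case O2 -/
lemma C3stepC (h : CoreHyp i B) (hv : Vis i x y z)
    {P1 R0 W1 W2 : Fin 4 → ℤ}
    (hP1 : P1 ∈ B) (hR0 : R0 ∈ B) (hW1 : W1 ∈ B) (hW2 : W2 ∈ B)
    (hP1z : P1 z = 1) (hR0z : 2 ≤ R0 z) (hR0y : R0 y = 0)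
    (hW1z : W1 z = 0) (hW1y : W1 y = 0) (hW2z : W2 z = 0) (hW2y : W2 y = 1) :
    CoreConcl i B := by
  have hnnP1x : 0 ≤ P1 x := h.nn P1 hP1 x
  have hnne : 0 ≤ W1 x := h.nn W1 hW1 x
  have hnnf : 0 ≤ W2 x := h.nn W2 hW2 x
  have hnnx0 : 0 ≤ R0 x := h.nn R0 hR0 x
  have hindT0 : ¬ vdep i ![R0, W1, W2] := by
    apply indep_of_det y z hv.yi hv.zi
    have : (W1 y - R0 y) * (W2 z - R0 z) - (W1 z - R0 z) * (W2 y - R0 y)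
        = R0 z := by rw [hR0y, hW1y, hW1z, hW2y, hW2z]; ring
    omega
  have hplane := plane_eq h.dep4 hR0 hW1 hW2 hindT0 x y z hv.xi hv.yi hv.zi
    (R0 z : ℚ) ((R0 z : ℚ) * ((W1 x : ℚ) - (W2 x : ℚ))) ((W1 x : ℚ) - (R0 x : ℚ))
    ((W1 x : ℚ) * (R0 z : ℚ))
    (by rw [hR0y]; push_cast; ring)
    (by rw [hW1y, hW1z]; push_cast; ring)
    (by rw [hW2y, hW2z]; push_cast; ring)
  -- the plane equation over the integers
  have hplaneZ : ∀ q ∈ B, R0 z * q x + R0 z * (W1 x - W2 x) * q y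
      + (W1 x - R0 x) * q z = W1 x * R0 z := by
    intro q hq
    have := hplane q hq
    exact_mod_cast this
  -- the rule for points at positive height
  have Urule : ∀ R ∈ B, 1 ≤ R z → R z = 1 ∨ R y = 0 ∨
      ((R x = 1 ∧ W1 x = 0 ∧ W2 x = 0) ∨ (W1 x = 1 ∧ R x = 0 ∧ W2 x = 0) ∨
        (W2 x = 1 ∧ R x = 0 ∧ W1 x = 0)) := by
    intro R hR hRz
    have hindR : ¬ vdep i ![R, W1, W2] := by
      apply indep_of_det y z hv.yi hv.zi
      have : (W1 y - R y) * (W2 z - R z) - (W1 z - R z) * (W2 y - R y)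
          = R z := by rw [hW1y, hW1z, hW2y, hW2z]; ring
      omega
    obtain ⟨k, hk, hpt⟩ := h.pat3 R hR W1 hW1 W2 hW2 hindR
    rcases hv.cases hk with rfl | rfl | rfl
    · exact Or.inr (Or.inr hpt)
    · rcases hpt with ⟨h1, h2, h3⟩ | ⟨h1, h2, h3⟩ | ⟨h1, h2, h3⟩
      · omega
      · omega
      · exact Or.inr (Or.inl h2)
    · rcases hpt with ⟨h1, h2, h3⟩ | ⟨h1, h2, h3⟩ | ⟨h1, h2, h3⟩
      · exact Or.inl h1
      · omega
      · omega
  -- no base point other than W2 has nonzero y-coordinate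
  have Zrule : ∀ q ∈ B, q z = 0 → q ≠ W2 → q y = 0 := by
    intro q hq hqz hqW2
    by_contra hqy
    have hqy1 : 1 ≤ q y := by have := h.nn q hq y; omega
    have hind1 : ¬ vdep i ![R0, q, W1] := by
      apply indep_of_det y z hv.yi hv.zi
      have : (q y - R0 y) * (W1 z - R0 z) - (q z - R0 z) * (W1 y - R0 y)
          = -(q y * R0 z) := by rw [hR0y, hW1y, hW1z, hqz]; ring
      rw [this]
      exact neg_ne_zero.mpr (mul_ne_zero (by omega) (by omega))
    obtain ⟨k1, hk1, hpt1⟩ := h.pat3 R0 hR0 q hq W1 hW1 hind1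
    have hqW2' : q x ≠ W2 x ∨ q y ≠ W2 y := by
      rcases h.ne3 hv hq hW2 hqW2 with h' | h' | h'
      · exact Or.inl h'
      · exact Or.inr h'
      · omega
    by_cases hqy1' : q y = 1
    · -- then by the plane equation q x = W2 x, so q = W2
      apply hqW2
      apply h.inj q hq W2 hW2
      have hpl := hplaneZ q hq
      have hplW2 := hplaneZ W2 hW2
      rw [hqz, hqy1'] at hpl
      rw [hW2z, hW2y] at hplW2
      have hqx : q x = W2 x := by
        have : R0 z * q x = R0 z * W2 x := by linarith
        have hR0z0 : R0 z ≠ 0 := by omega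
        exact mul_left_cancel₀ hR0z0 this
      intro m hm
      rcases hv.cases hm with rfl | rfl | rfl <;> omega
    · -- q y ≥ 2 ; both triples give x-patterns
      have hpx1 : (R0 x = 1 ∧ q x = 0 ∧ W1 x = 0) ∨ (q x = 1 ∧ R0 x = 0 ∧ W1 x = 0) ∨
          (W1 x = 1 ∧ R0 x = 0 ∧ q x = 0) := by
        rcases hv.cases hk1 with rfl | rfl | rfl
        · exact hpt1
        · exfalso
          rcases hpt1 with ⟨h1, h2, h3⟩ | ⟨h1, h2, h3⟩ | ⟨h1, h2, h3⟩ <;> omega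
        · exfalso
          rcases hpt1 with ⟨h1, h2, h3⟩ | ⟨h1, h2, h3⟩ | ⟨h1, h2, h3⟩ <;> omega
      have hind2 : ¬ vdep i ![R0, q, W2] := by
        rcases hqW2' with ht | ht
        · apply indep_of_det x z hv.xi hv.zi
          have : (q x - R0 x) * (W2 z - R0 z) - (q z - R0 z) * (W2 x - R0 x)
              = R0 z * (W2 x - q x) := by rw [hqz, hW2z]; ring
          rw [this]
          exact mul_ne_zero (by omega) (by omega)
        · apply indep_of_det y z hv.yi hv.zi
          have : (q y - R0 y) * (W2 z - R0 z) - (q z - R0 z) * (W2 y - R0 y)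
              = R0 z * (W2 y - q y) := by rw [hqz, hW2z, hR0y]; ring
          rw [this]
          exact mul_ne_zero (by omega) (by omega)
      obtain ⟨k2, hk2, hpt2⟩ := h.pat3 R0 hR0 q hq W2 hW2 hind2
      have hpx2 : (R0 x = 1 ∧ q x = 0 ∧ W2 x = 0) ∨ (q x = 1 ∧ R0 x = 0 ∧ W2 x = 0) ∨
          (W2 x = 1 ∧ R0 x = 0 ∧ q x = 0) := by
        rcases hv.cases hk2 with rfl | rfl | rfl
        · exact hpt2
        · exfalso
          rcases hpt2 with ⟨h1, h2, h3⟩ | ⟨h1, h2, h3⟩ | ⟨h1, h2, h3⟩ <;> omega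
        · exfalso
          rcases hpt2 with ⟨h1, h2, h3⟩ | ⟨h1, h2, h3⟩ | ⟨h1, h2, h3⟩ <;> omega
      have hplq := hplaneZ q hq
      have hplP1 := hplaneZ P1 hP1
      rw [hqz] at hplq
      rw [hP1z] at hplP1
      rcases hpx1 with ⟨h1, h2, h3⟩ | ⟨h1, h2, h3⟩ | ⟨h1, h2, h3⟩ <;>
        rcases hpx2 with ⟨k1', k2', k3'⟩ | ⟨k1', k2', k3'⟩ | ⟨k1', k2', k3'⟩
      -- (O1,P1) : R0 x = 1, W1 x = 0, W2 x = 0 : plane at P1 gives R0 z * P1 x = 1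
      · rw [h1, h3, k3'] at hplP1
        have hkey : R0 z * P1 x = 1 := by linear_combination hplP1
        rcases (by omega : P1 x = 0 ∨ 1 ≤ P1 x) with h0 | h0
        · rw [h0, mul_zero] at hkey; omega
        · have : 2 * 1 ≤ R0 z * P1 x := mul_le_mul (by omega) h0 (by omega) (by omega)
          omega
      · omega
      · omega
      · omega
      -- (O2,P2) : q x = 1, R0 x = 0, W1 x = 0, W2 x = 0 : plane at q : R0 z = 0
      · rw [h1, h2, h3, k3'] at hplq
        have hkey : R0 z = 0 := by linear_combination hplq
        omega
      · omega
      · omega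
      · omega
      -- (O3,P3) : W1 x = 1, W2 x = 1, q x = 0, R0 x = 0 : plane at q : 0 = R0 z
      · rw [h1, h2, h3, k1'] at hplq
        have hkey : R0 z = 0 := by linear_combination -hplq
        omega
  -- main split
  by_cases hexy : ∃ R ∈ B, 1 ≤ R z ∧ R y ≠ 0
  · obtain ⟨Rs, hRs, hRsz, hRsy⟩ := hexy
    have hRsy1 : 1 ≤ Rs y := by have := h.nn Rs hRs y; omega
    -- F1
    have hindF1 : ¬ vdep i ![Rs, R0, W1] := by
      apply indep_of_det y z hv.yi hv.zi
      have : (R0 y - Rs y) * (W1 z - Rs z) - (R0 z - Rs z) * (W1 y - Rs y)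
          = Rs y * R0 z := by rw [hR0y, hW1y, hW1z]; ring
      rw [this]
      exact mul_ne_zero (by omega) (by omega)
    obtain ⟨kF1, hkF1, hptF1⟩ := h.pat3 Rs hRs R0 hR0 W1 hW1 hindF1
    have F1 : Rs y = 1 ∨ ((Rs x = 1 ∧ R0 x = 0 ∧ W1 x = 0) ∨
        (R0 x = 1 ∧ Rs x = 0 ∧ W1 x = 0) ∨ (W1 x = 1 ∧ Rs x = 0 ∧ R0 x = 0)) := by
      rcases hv.cases hkF1 with rfl | rfl | rfl
      · exact Or.inr hptF1
      · rcases hptF1 with ⟨h1, h2, h3⟩ | ⟨h1, h2, h3⟩ | ⟨h1, h2, h3⟩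
        · exact Or.inl h1
        · omega
        · omega
      · exfalso
        rcases hptF1 with ⟨h1, h2, h3⟩ | ⟨h1, h2, h3⟩ | ⟨h1, h2, h3⟩ <;> omega
    -- F2
    have hindF2 : ¬ vdep i ![Rs, R0, W2] := by
      apply indep_of_det y z hv.yi hv.zi
      have heq : (R0 y - Rs y) * (W2 z - Rs z) - (R0 z - Rs z) * (W2 y - Rs y)
          = (Rs y - 1) * R0 z + Rs z := by rw [hR0y, hW2y, hW2z]; ring
      rw [heq]
      have : 0 ≤ (Rs y - 1) * R0 z := mul_nonneg (by omega) (by omega)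
      omega
    obtain ⟨kF2, hkF2, hptF2⟩ := h.pat3 Rs hRs R0 hR0 W2 hW2 hindF2
    have F2 : (Rs x = 1 ∧ R0 x = 0 ∧ W2 x = 0) ∨ (R0 x = 1 ∧ Rs x = 0 ∧ W2 x = 0) ∨
        (W2 x = 1 ∧ Rs x = 0 ∧ R0 x = 0) := by
      rcases hv.cases hkF2 with rfl | rfl | rfl
      · exact hptF2
      · exfalso
        rcases hptF2 with ⟨h1, h2, h3⟩ | ⟨h1, h2, h3⟩ | ⟨h1, h2, h3⟩ <;> omega
      · exfalso
        rcases hptF2 with ⟨h1, h2, h3⟩ | ⟨h1, h2, h3⟩ | ⟨h1, h2, h3⟩ <;> omega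
    -- if the three generators have x-coordinate 0, contradiction with a point
    have xplane : R0 x = 0 → W1 x = 0 → W2 x = 0 → False := by
      intro e1 e2 e3
      have := plane_eq h.dep4 hR0 hW1 hW2 hindT0 x y z hv.xi hv.yi hv.zi
        1 0 0 0
        (by rw [e1]; push_cast; ring)
        (by rw [e2]; push_cast; ring)
        (by rw [e3]; push_cast; ring)
      have hRsx := this Rs hRs
      have hRsx0 : Rs x = 0 := by exact_mod_cast (by linarith : (Rs x : ℚ) = 0)
      -- but then every x-coordinate would vanish on an independent triple;
      -- contradiction with F2
      rcases F2 with ⟨h1, h2, h3⟩ | ⟨h1, h2, h3⟩ | ⟨h1, h2, h3⟩ <;> omega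
    rcases F2 with ⟨hxs, hx0, hf⟩ | ⟨hx0, hxs, hf⟩ | ⟨hf, hxs, hx0⟩
    · -- (a) Rs x = 1, R0 x = 0, W2 x = 0
      exfalso
      rcases F1 with hy1 | hF1x
      · -- Rs y = 1 : use Urule on Rs
        rcases Urule Rs hRs (by omega) with hz1 | hy0 | hptU
        · -- Rs = (1,1,1) : plane gives R0 z + W1 x = 0
          have hpl := hplaneZ Rs hRs
          rw [hxs, hy1, hz1, hx0, hf] at hpl
          have hkey : R0 z + W1 x = 0 := by linear_combination hpl
          omega
        · omega
        · rcases hptU with ⟨h1, h2, h3⟩ | ⟨h1, h2, h3⟩ | ⟨h1, h2, h3⟩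
          · exact xplane hx0 h2 h3
          · omega
          · omega
      · rcases hF1x with ⟨h1, h2, h3⟩ | ⟨h1, h2, h3⟩ | ⟨h1, h2, h3⟩
        · exact xplane hx0 h3 hf
        · omega
        · omega
    · -- (b) R0 x = 1, Rs x = 0, W2 x = 0
      have hyRs : Rs y = 1 := by
        rcases F1 with hy1 | hF1x
        · exact hy1
        · exfalso
          rcases hF1x with ⟨h1, h2, h3⟩ | ⟨h1, h2, h3⟩ | ⟨h1, h2, h3⟩
          · omega
          · -- W1 x = 0 : then Rs, W1, W2 all have x = 0
            have hindS : ¬ vdep i ![Rs, W1, W2] := by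
              apply indep_of_det y z hv.yi hv.zi
              have : (W1 y - Rs y) * (W2 z - Rs z) - (W1 z - Rs z) * (W2 y - Rs y)
                  = Rs z := by rw [hW1y, hW1z, hW2y, hW2z]; ring
              omega
            have := plane_eq h.dep4 hRs hW1 hW2 hindS x y z hv.xi hv.yi hv.zi
              1 0 0 0
              (by rw [hxs]; push_cast; ring)
              (by rw [h3]; push_cast; ring)
              (by rw [hf]; push_cast; ring)
            have hc := this R0 hR0
            rw [hx0] at hc
            norm_num at hc
          · omega
      -- plane at Rs : (W1 x - 1) * Rs z = 0, so W1 x = 1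
      have hpl := hplaneZ Rs hRs
      rw [hxs, hyRs, hx0, hf] at hpl
      have hW1x1 : W1 x = 1 := by
        have hfact : (W1 x - 1) * Rs z = 0 := by linarith
        rcases mul_eq_zero.mp hfact with h' | h'
        · omega
        · omega
      -- now every point satisfies p x + p y = 1
      right; left
      refine ⟨x, y, hv.xi, hv.yi, hv.xy, fun p hp => ?_⟩
      have hpl' := hplaneZ p hp
      rw [hW1x1, hf, hx0] at hpl'
      have hsum : p x + p y = 1 := by
        have hfact : R0 z * (p x + p y - 1) = 0 := by linarith
        rcases mul_eq_zero.mp hfact with h' | h'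
        · omega
        · omega
      have := h.nn p hp x
      have := h.nn p hp y
      omega
    · -- (c) W2 x = 1, Rs x = 0, R0 x = 0
      have hyRs : Rs y = 1 := by
        rcases F1 with hy1 | hF1x
        · exact hy1
        · exfalso
          rcases hF1x with ⟨h1, h2, h3⟩ | ⟨h1, h2, h3⟩ | ⟨h1, h2, h3⟩
          · omega
          · omega
          · -- W1 x = 1 : plane at P1 : R0 z * P1 x + P1 z = R0 z, impossible
            have hpl := hplaneZ P1 hP1
            rw [h1, hf, hx0, hP1z] at hpl
            have hkey : R0 z * P1 x + 1 = R0 z := by linear_combination hpl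
            rcases (by omega : P1 x = 0 ∨ 1 ≤ P1 x) with h0 | h0
            · rw [h0, mul_zero] at hkey; omega
            · have h2' : R0 z ≤ R0 z * P1 x := le_mul_of_one_le_right (by omega) h0
              omega
      rcases Urule Rs hRs (by omega) with hz1 | hy0 | hptU
      · -- Rs = (0,1,1) : plane gives W1 x = R0 z, the flat configuration
        have hpl := hplaneZ Rs hRs
        rw [hxs, hyRs, hz1, hf, hx0] at hpl
        have hez0 : W1 x = R0 z := by linear_combination hpl
        have ha2 : 2 ≤ W1 x := by omega
        -- integral plane : p x + (R0 z - 1) * p y + p z = R0 z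
        have hplaneI : ∀ q ∈ B, q x + (R0 z - 1) * q y + q z = R0 z := by
          intro q hq
          have hq' := hplaneZ q hq
          rw [hez0, hf, hx0] at hq'
          have hfact : R0 z * (q x + (R0 z - 1) * q y + q z - R0 z) = 0 := by
            linear_combination hq'
          rcases mul_eq_zero.mp hfact with h' | h'
          · omega
          · omega
        have hall : ∀ p ∈ B, p = R0 ∨ p = W1 ∨ p = Rs ∨ p = W2 := by
          intro p hp
          by_cases hpz : p z = 0
          · by_cases hpW2 : p = W2
            · exact Or.inr (Or.inr (Or.inr hpW2))
            · have hpy := Zrule p hp hpz hpW2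
              have hpl' := hplaneI p hp
              rw [hpy, hpz, mul_zero] at hpl'
              right; left
              apply h.inj p hp W1 hW1
              intro m hm
              rcases hv.cases hm with rfl | rfl | rfl <;> omega
          · have hpz1 : 1 ≤ p z := by have := h.nn p hp z; omega
            by_cases hpy : p y = 0
            · -- p x + p z = R0 z ; the pattern with Rs and W2 forces p x = 0
              have hpl' := hplaneI p hp
              rw [hpy, mul_zero] at hpl'
              have hindp : ¬ vdep i ![p, Rs, W2] := by
                apply indep_of_det y z hv.yi hv.zi
                have : (Rs y - p y) * (W2 z - p z) - (Rs z - p z) * (W2 y - p y)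
                    = -1 := by rw [hyRs, hz1, hW2y, hW2z, hpy]; ring
                rw [this]; norm_num
              obtain ⟨k', hk', hpt⟩ := h.pat3 p hp Rs hRs W2 hW2 hindp
              have hpx0 : p x = 0 := by
                rcases hv.cases hk' with rfl | rfl | rfl <;>
                  rcases hpt with ⟨h1', h2', h3'⟩ | ⟨h1', h2', h3'⟩ | ⟨h1', h2', h3'⟩ <;>
                    omega
              left
              apply h.inj p hp R0 hR0
              intro m hm
              rcases hv.cases hm with rfl | rfl | rfl <;> omega
            · have hpz1' : p z = 1 := by
                rcases Urule p hp hpz1 with h' | h' | h'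
                · exact h'
                · exact absurd h' hpy
                · exfalso
                  rcases h' with ⟨h1', h2', h3'⟩ | ⟨h1', h2', h3'⟩ | ⟨h1', h2', h3'⟩ <;>
                    omega
              have hpl' := hplaneI p hp
              rw [hpz1'] at hpl'
              have hpynn : 1 ≤ p y := by have := h.nn p hp y; omega
              have hpy1 : p y = 1 := by
                rcases (by omega : p y = 1 ∨ 2 ≤ p y) with h' | h'
                · exact h'
                · exfalso
                  have hmul : (R0 z - 1) * 2 ≤ (R0 z - 1) * p y :=
                    mul_le_mul_of_nonneg_left h' (by omega)
                  have := h.nn p hp x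
                  omega
              have hpx0 : p x = 0 := by
                rw [hpy1, mul_one] at hpl'
                omega
              right; right; left
              apply h.inj p hp Rs hRs
              intro m hm
              rcases hv.cases hm with rfl | rfl | rfl <;> omega
        right; right
        exact mkFlat hv hR0 hW1 hRs hW2 (by omega : (1:ℤ) ≤ R0 z) hx0 hR0y rfl
          hez0 hW1y hW1z hxs hyRs hz1 hf hW2y hW2z hall
      · omega
      · rcases hptU with ⟨h1, h2, h3⟩ | ⟨h1, h2, h3⟩ | ⟨h1, h2, h3⟩
        · omega
        · omega
        · -- W1 x = 0 : then every point has p x = p y, contradiction at Rs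
          exfalso
          have hindS : ¬ vdep i ![R0, W1, W2] := hindT0
          have := plane_eq h.dep4 hR0 hW1 hW2 hindT0 x y z hv.xi hv.yi hv.zi
            1 (-1) 0 0
            (by rw [hx0, hR0y]; push_cast; ring)
            (by rw [h3, hW1y]; push_cast; ring)
            (by rw [hf, hW2y]; push_cast; ring)
          have hc := this Rs hRs
          rw [hxs, hyRs] at hc
          norm_num at hc
  · -- no point of positive height has nonzero y : B1 at y
    push_neg at hexy
    left
    refine ⟨y, hv.yi, W2, hW2, hW2y, fun p hp hne => ?_⟩
    by_cases hpz : p z = 0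
    · exact Zrule p hp hpz hne
    · have : 1 ≤ p z := by have := h.nn p hp z; omega
      exact hexy p hp this

end CaseC3b


section CaseC3c

variable {i x y z : Fin 4} {B : Finset (Fin 4 → ℤ)}

/-- case C3 : some point has z-coordinate at least 2 -/
lemma caseC3 (h : CoreHyp i B) (hv : Vis i x y z)
    (he : ∃ A, A ∈ B ∧ ∃ A', A' ∈ B ∧ ∃ A'', A'' ∈ B ∧ ¬ vdep i ![A, A', A''])
    {P1 P2 P3 R0 : Fin 4 → ℤ}
    (hP1 : P1 ∈ B) (hP2 : P2 ∈ B) (hP3 : P3 ∈ B) (hR0 : R0 ∈ B)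
    (hind : ¬ vdep i ![P1, P2, P3])
    (hP1z : P1 z = 1) (hP2z : P2 z = 0) (hP3z : P3 z = 0)
    (hR0z : 2 ≤ R0 z) : CoreConcl i B := by
  by_cases hO1 : ∀ W ∈ B, W z = 0 → W x = 0
  · exact C3O1 h hv he hP1 hP2 hP3 hR0 hind hP1z hP2z hP3z hR0z hO1
  by_cases hO1' : ∀ W ∈ B, W z = 0 → W y = 0
  · exact C3O1 h hv.swapxy he hP1 hP2 hP3 hR0 hind hP1z hP2z hP3z hR0z hO1'
  push_neg at hO1 hO1'
  obtain ⟨Wa, hWa, hWaz, hWax⟩ := hO1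
  obtain ⟨Wb, hWb, hWbz, hWby⟩ := hO1'
  have pairZ : ∀ W ∈ B, ∀ W' ∈ B, W z = 0 → W' z = 0 → W ≠ W' →
      pat x R0 W W' ∨ pat y R0 W W' := by
    intro W hW W' hW' hWz hW'z hWW'
    have hindZ : ¬ vdep i ![R0, W, W'] := by
      rcases h.ne3 hv hW hW' hWW' with ht | ht | ht
      · apply indep_of_det x z hv.xi hv.zi
        have : (W x - R0 x) * (W' z - R0 z) - (W z - R0 z) * (W' x - R0 x)
            = R0 z * (W' x - W x) := by rw [hWz, hW'z]; ring
        rw [this]; exact mul_ne_zero (by omega) (by omega)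
      · apply indep_of_det y z hv.yi hv.zi
        have : (W y - R0 y) * (W' z - R0 z) - (W z - R0 z) * (W' y - R0 y)
            = R0 z * (W' y - W y) := by rw [hWz, hW'z]; ring
        rw [this]; exact mul_ne_zero (by omega) (by omega)
      · omega
    obtain ⟨k, hk, hpt⟩ := h.pat3 R0 hR0 W hW W' hW' hindZ
    rcases hv.cases hk with rfl | rfl | rfl
    · exact Or.inl hpt
    · exact Or.inr hpt
    · exfalso
      rcases hpt with ⟨h1, h2, h3⟩ | ⟨h1, h2, h3⟩ | ⟨h1, h2, h3⟩ <;> omega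
  have hP23 : P2 ≠ P3 := by
    rintro rfl
    exact hind (vdep3_of_visEq fun m hm => rfl)
  obtain ⟨Wc, hWc, hWcz, hWcb⟩ : ∃ Wc ∈ B, Wc z = 0 ∧ Wc ≠ Wb := by
    by_cases hP2b : P2 = Wb
    · exact ⟨P3, hP3, hP3z, fun hc => hP23 (by rw [hP2b, hc])⟩
    · exact ⟨P2, hP2, hP2z, hP2b⟩
  rcases pairZ Wb hWb Wc hWc hWbz hWcz (Ne.symm hWcb) with hp | hp
  · rcases hp with ⟨h1, h2, h3⟩ | ⟨h1, h2, h3⟩ | ⟨h1, h2, h3⟩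
    · -- R0 x = 1 : use the pair (Wa, Wb)
      have hWab : Wa ≠ Wb := fun hc => hWax (by rw [hc]; exact h2)
      rcases pairZ Wa hWa Wb hWb hWaz hWbz hWab with hq | hq
      · exfalso
        rcases hq with ⟨k1, k2, k3⟩ | ⟨k1, k2, k3⟩ | ⟨k1, k2, k3⟩ <;> omega
      · rcases hq with ⟨k1, k2, k3⟩ | ⟨k1, k2, k3⟩ | ⟨k1, k2, k3⟩
        · exact absurd k3 hWby
        · exact absurd k3 hWby
        · exact C3stepC h hv hP1 hR0 hWa hWb hP1z hR0z k2 hWaz k3 hWbz k1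
    · -- Wb x = 1, R0 x = 0 : mirrored O2'
      exact C3stepC h hv.swapxy hP1 hR0 hWc hWb hP1z hR0z h2 hWcz h3 hWbz h1
    · -- Wc x = 1, R0 x = 0 : mirrored O2'
      exact C3stepC h hv.swapxy hP1 hR0 hWb hWc hP1z hR0z h2 hWbz h3 hWcz h1
  · rcases hp with ⟨h1, h2, h3⟩ | ⟨h1, h2, h3⟩ | ⟨h1, h2, h3⟩
    · exact absurd h2 hWby
    · exact C3stepC h hv hP1 hR0 hWc hWb hP1z hR0z h2 hWcz h3 hWbz h1
    · exact absurd h3 hWby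

/-- the main combinatorial classification -/
theorem coreMain (h : CoreHyp i B)
    (he : ∃ A, A ∈ B ∧ ∃ A', A' ∈ B ∧ ∃ A'', A'' ∈ B ∧ ¬ vdep i ![A, A', A'']) :
    CoreConcl i B := by
  obtain ⟨A, hA, A', hA', A'', hA'', hind⟩ := he
  obtain ⟨k, hk, hpt⟩ := h.pat3 A hA A' hA' A'' hA'' hind
  obtain ⟨x0, y0, hxy, hxk, hyk, hxi, hyi⟩ := other_two i k hk
  have hv : Vis i x0 y0 k := ⟨hxy, hxk, hyk, hxi, hyi, hk⟩
  obtain ⟨P1, P2, P3, hP1, hP2, hP3, hindP, e1, e2, e3⟩ :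
      ∃ P1 P2 P3, P1 ∈ B ∧ P2 ∈ B ∧ P3 ∈ B ∧ ¬ vdep i ![P1, P2, P3] ∧
        P1 k = 1 ∧ P2 k = 0 ∧ P3 k = 0 := by
    rcases hpt with ⟨h1, h2, h3⟩ | ⟨h1, h2, h3⟩ | ⟨h1, h2, h3⟩
    · exact ⟨A, A', A'', hA, hA', hA'', hind, h1, h2, h3⟩
    · exact ⟨A', A, A'', hA', hA, hA'',
        fun hd => hind (vdep3_swap01 hd), h1, h2, h3⟩
    · exact ⟨A'', A, A', hA'', hA, hA',
        fun hd => hind (vdep3_rot (vdep3_rot hd)), h1, h2, h3⟩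
  by_cases hB1 : ∀ p ∈ B, p ≠ P1 → p k = 0
  · exact Or.inl ⟨k, hk, P1, hP1, e1, hB1⟩
  push_neg at hB1
  obtain ⟨R, hR, hRne, hRk⟩ := hB1
  by_cases hC3 : ∃ R0 ∈ B, 2 ≤ R0 k
  · obtain ⟨R0, hR0, hR0k⟩ := hC3
    exact caseC3 h hv ⟨A, hA, A', hA', A'', hA'', hind⟩ hP1 hP2 hP3 hR0 hindP
      e1 e2 e3 hR0k
  · push_neg at hC3
    have hz01 : ∀ p ∈ B, p k = 0 ∨ p k = 1 := by
      intro p hp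
      have := h.nn p hp k
      have := hC3 p hp
      omega
    have hRz : R k = 1 := by
      have := h.nn R hR k
      have := hC3 R hR
      omega
    exact caseC2 h hv hP1 hP2 hP3 hR hindP e1 e2 e3 hRne hRz hz01

end CaseC3c


/-- four vectors in the plane are linearly dependent -/
lemma fourDep (c : Fin 4 → (Fin 3 → ℚ)) :
    ∃ g : Fin 4 → ℚ, g ≠ 0 ∧ ∀ t, ∑ j, g j * c j t = 0 := by
  have hdep : ¬ LinearIndependent ℚ c := by
    intro h
    have := h.fintype_card_le_finrank
    rw [Module.finrank_fin_fun] at this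
    simp at this
  rw [Fintype.linearIndependent_iff] at hdep
  push_neg at hdep
  obtain ⟨g, hg, j0, hj0⟩ := hdep
  refine ⟨g, fun h0 => hj0 (by rw [h0]; rfl), fun t => ?_⟩
  have := congrFun hg t
  simpa [Finset.sum_apply] using this

/-- affine independence is invariant under coordinate permutations -/
lemma ai_comp_perm {n : ℕ} (σ : Equiv.Perm (Fin 4)) (v : Fin n → (Fin 4 → ℚ)) :
    AffineIndependent ℚ (fun j => v j ∘ σ) ↔ AffineIndependent ℚ v := by
  rw [← not_iff_not, ← wdep_iff_not_ai, ← wdep_iff_not_ai]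
  constructor
  · rintro ⟨w, hw0, hsum, hcombo⟩
    refine ⟨w, hw0, hsum, fun m => ?_⟩
    have := hcombo (σ.symm m)
    simpa [Function.comp] using this
  · rintro ⟨w, hw0, hsum, hcombo⟩
    exact ⟨w, hw0, hsum, fun m => hcombo (σ m)⟩

/-- pyramid with apex on a coordinate ray: if a B-facet `τ ⊂ ℤ⁴_{≥0}` is a
pyramid whose apex `Q` lies on a coordinate ray (with coordinate ≥ 2) and whose base
`τ \ {Q}` is 2-dimensional (contained in an affine 2-plane), then `τ` is a B₁-facet, a
B₂-facet, or a flat B-border pyramid. -/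
theorem stmt16 (S : Finset (Fin 4 → ℤ)) (hS : IsBFacet S)
    (i : Fin 4) (Q : Fin 4 → ℤ) (hQ : Q ∈ S)
    (hray : (∀ m, m ≠ i → Q m = 0) ∧ 2 ≤ Q i)
    (hbase2 : ∃ w : Fin 3 → (Fin 4 → ℤ), (∀ k, w k ∈ S.erase Q) ∧
      AffineIndependent ℚ (fun k => toQ (w k)))
    (hbaseplanar : ∀ v : Fin 4 → (Fin 4 → ℤ), (∀ k, v k ∈ S.erase Q) →
      ¬ AffineIndependent ℚ (fun k => toQ (v k))) :
    IsB1Facet S ∨ IsB2Facet S ∨ IsFlatBBorderPyramid S := by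
  obtain ⟨hnnS, ⟨a, ha, b, hab⟩, h3d, hBsimp⟩ := hS
  obtain ⟨hQv, hQi⟩ := hray
  have hcore : CoreHyp i (S.erase Q) :=
    { nn := fun p hp m => hnnS p (Finset.mem_of_mem_erase hp) m
      inj := fun p hp q hq hvis =>
        visEq_S ha hab (Finset.mem_of_mem_erase hp) (Finset.mem_of_mem_erase hq) hvis
      dep4 := base_dep4 ha hab hbaseplanar
      pat3 := fun A hA A' hA' A'' hA'' hind =>
        base_pat ha hab hQ hQv hQi h3d hbaseplanar hBsimp hA hA' hA'' hind }
  obtain ⟨A, A', A'', hA, hA', hA'', hindE⟩ := base_exists (i := i) ha hab hbase2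
  have he : ∃ A, A ∈ S.erase Q ∧ ∃ A', A' ∈ S.erase Q ∧ ∃ A'', A'' ∈ S.erase Q ∧
      ¬ vdep i ![A, A', A''] := ⟨A, hA, A', hA', A'', hA'', hindE⟩
  rcases coreMain hcore he with hB1 | hD2 | hFlat
  · -- B1 facet
    obtain ⟨k, hk, q, hqB, hq1, hq0⟩ := hB1
    left
    refine ⟨k, q, Finset.mem_of_mem_erase hqB, hq1, fun p hpS hne => ?_⟩
    by_cases hpQ : p = Q
    · rw [hpQ]
      exact hQv k hk
    · exact hq0 p (Finset.mem_erase.mpr ⟨hpQ, hpS⟩) hne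
  · -- B2 facet (using three-dimensionality to produce the witnesses)
    obtain ⟨k, l, hki, hli, hkl, hall⟩ := hD2
    have hallS : ∀ p ∈ S, (p k = 0 ∧ p l = 0) ∨ (p k = 1 ∧ p l = 0) ∨
        (p k = 0 ∧ p l = 1) := by
      intro p hpS
      by_cases hpQ : p = Q
      · rw [hpQ]
        exact Or.inl ⟨hQv k hki, hQv l hli⟩
      · exact hall p (Finset.mem_erase.mpr ⟨hpQ, hpS⟩)
    have dimarg : ∀ k' : Fin 4, k' ≠ i → (∀ p ∈ S, p k' = 0) → False := by
      intro k' hk'i hzero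
      obtain ⟨v, hvS, hvAI⟩ := h3d
      refine absurd hvAI ((vdep_iff_S (i := i) ha hab v hvS).mp ?_)
      obtain ⟨m1, m2, hm12, hm1k, hm2k, hm1i, hm2i⟩ := other_two i k' hk'i
      obtain ⟨g, hg0, hgc⟩ := fourDep fun j => ![1, (v j m1 : ℚ), (v j m2 : ℚ)]
      have hgs : ∑ j, g j = 0 := by
        have := hgc 0
        simpa using this
      refine ⟨g, hg0, hgs, fun m hm => ?_⟩
      rcases visible_cases hm12 hm1k hm2k hm1i hm2i hk'i hm
        with rfl | rfl | rfl
      · have := hgc 1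
        simpa using this
      · have := hgc 2
        simpa using this
      · have : ∀ j, (v j m : ℚ) = 0 := fun j => by
          rw [hzero (v j) (hvS j)]; norm_num
        simp [this]
    by_cases hex1 : ∃ p ∈ S, p k = 1 ∧ p l = 0
    · by_cases hex2 : ∃ p ∈ S, p k = 0 ∧ p l = 1
      · right; left
        exact ⟨k, l, hkl, hallS, ⟨Q, hQ, hQv k hki, hQv l hli⟩, hex1, hex2⟩
      · exfalso
        push_neg at hex2
        apply dimarg l hli
        intro p hpS
        rcases hallS p hpS with ⟨h1, h2⟩ | ⟨h1, h2⟩ | ⟨h1, h2⟩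
        · exact h2
        · exact h2
        · exact absurd h2 (hex2 p hpS h1)
    · exfalso
      push_neg at hex1
      apply dimarg k hki
      intro p hpS
      rcases hallS p hpS with ⟨h1, h2⟩ | ⟨h1, h2⟩ | ⟨h1, h2⟩
      · exact h1
      · exact absurd h2 (hex1 p hpS h1)
      · exact h1
  · -- flat border pyramid
    obtain ⟨σ, hσ3, a', c1, c2, c3, c4, ha', himg⟩ := hFlat
    right; right
    refine ⟨σ, a', Q i, c1, c2, c3, c4, ha', ?_, ?_⟩
    · have hQσ : Q ∘ σ = ![0, 0, 0, Q i] := by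
        funext m
        have hσne : ∀ m' : Fin 4, m' ≠ 3 → σ m' ≠ i := by
          intro m' hm' hc
          exact hm' (σ.injective (hc.trans hσ3.symm))
        fin_cases m
        · show Q (σ 0) = 0; exact hQv _ (hσne 0 (by decide))
        · show Q (σ 1) = 0; exact hQv _ (hσne 1 (by decide))
        · show Q (σ 2) = 0; exact hQv _ (hσne 2 (by decide))
        · show Q (σ 3) = Q i; rw [hσ3]
      calc S.image (fun p => p ∘ σ)
          = (insert Q (S.erase Q)).image (fun p => p ∘ σ) := by
            rw [Finset.insert_erase hQ]
        _ = insert (Q ∘ σ) ((S.erase Q).image (fun p => p ∘ σ)) := by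
            rw [Finset.image_insert]
        _ = _ := by rw [hQσ, himg]
    · -- the four base points are dependent
      have hmem : ∀ q ∈ ({![0, 0, a', c1], ![a', 0, 0, c2], ![0, 1, 1, c3],
          ![1, 1, 0, c4]} : Finset (Fin 4 → ℤ)),
          ∃ p ∈ S.erase Q, p ∘ σ = q := by
        intro q hq
        rw [← himg] at hq
        rw [Finset.mem_image] at hq
        obtain ⟨p, hp, hpq⟩ := hq
        exact ⟨p, hp, hpq⟩
      obtain ⟨b1, hb1, he1⟩ := hmem ![0, 0, a', c1] (by simp)
      obtain ⟨b2, hb2, he2⟩ := hmem ![a', 0, 0, c2] (by simp)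
      obtain ⟨b3, hb3, he3⟩ := hmem ![0, 1, 1, c3] (by simp)
      obtain ⟨b4, hb4, he4⟩ := hmem ![1, 1, 0, c4] (by simp)
      intro hAI
      have hfam : (fun j => toQ ((![![0, 0, a', c1], ![a', 0, 0, c2], ![0, 1, 1, c3],
          ![1, 1, 0, c4]] : Fin 4 → Fin 4 → ℤ) j))
          = fun j => (fun j' => toQ (![b1, b2, b3, b4] j')) j ∘ σ := by
        funext j
        fin_cases j
        · show toQ ![0, 0, a', c1] = toQ b1 ∘ σ
          rw [← he1]; rfl
        · show toQ ![a', 0, 0, c2] = toQ b2 ∘ σ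
          rw [← he2]; rfl
        · show toQ ![0, 1, 1, c3] = toQ b3 ∘ σ
          rw [← he3]; rfl
        · show toQ ![1, 1, 0, c4] = toQ b4 ∘ σ
          rw [← he4]; rfl
      rw [hfam, ai_comp_perm] at hAI
      exact hbaseplanar ![b1, b2, b3, b4]
        (by intro j; fin_cases j <;> assumption) hAI
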